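/- arXiv:0712.1228 — 2 statements merged into one kernel-verified Lean document; each statement's English description precedes it below -/
import Mathlib

section
/- Let q = 2, let U_3 × U_2 be embedded block-diagonally in U_5 (matrices u ∈ U_5 with u_{ij} = 0 for i ≠ j unless i < j ≤ 3 or 4 ≤ i < j), and let 1 denote the trivial character of U_3 × U_2 (which is a supercharacter). Then the superclass function SInd_{U_3×U_2}^{U_5}(1) is not a character of U_5, i.e. it is not a nonnegative-integer linear combination of irreducible characters of U_5. -/
/-!
STATEMENT 13: Let q = 2, let U_3 × U_2 be embedded block-diagonally in U_5, and let 1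
denote the trivial character of U_3 × U_2.  Then the superclass function
SInd_{U_3×U_2}^{U_5}(1) is not a character of U_5: it is not the trace of any matrix
representation of U_5, equivalently not a nonnegative-integer combination of
irreducible characters.  (0-based indices: the 1-based conditions i < j ≤ 3 and
4 ≤ i < j read i < j ∧ (j:ℕ) ≤ 2 and 3 ≤ (i:ℕ) ∧ i < j.)
-/
open scoped Classical

noncomputable section

def setFinset {α : Type*} [Fintype α] (S : Set α) : Finset α :=
  Finset.univ.filter (· ∈ S)

/-- A strict partial order on `{1,…,n}` that is a subrelation of the usual order. -/
def IsPatternOrder {n : ℕ} (P : Fin n → Fin n → Prop) : Prop :=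
  (∀ i j, P i j → i < j) ∧ ∀ i j k, P i j → P j k → P i k

/-- The pattern group `U_P` of unipotent upper-triangular matrices supported on `P`. -/
def patternGroup (F : Type*) [Field F] {n : ℕ} (P : Fin n → Fin n → Prop) :
    Set (Matrix (Fin n) (Fin n) F) :=
  {u | (∀ i, u i i = 1) ∧ ∀ i j, i ≠ j → u i j ≠ 0 → P i j}

/-- `χ` is constant on the superclasses of `G`: `u ~ v` iff `v − 1 ∈ G(u−1)G`. -/
def IsSuperclassFn {A : Type*} [Ring A] (G : Set A) (χ : A → ℂ) : Prop :=
  ∀ u ∈ G, ∀ v ∈ G, (∃ x ∈ G, ∃ y ∈ G, v - 1 = x * (u - 1) * y) → χ u = χ v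

/-- Superinduction `SInd_H^G(χ)(g) = (1/(|G||H|)) Σ_{x,y∈G} χ̇(x(g−1)y + 1)`. -/
def SInd {A : Type*} [Ring A] [Fintype A] (G H : Set A) (χ : A → ℂ) (g : A) : ℂ :=
  (((setFinset G).card : ℂ) * ((setFinset H).card : ℂ))⁻¹ *
    ∑ x ∈ setFinset G, ∑ y ∈ setFinset G,
      if x * (g - 1) * y + 1 ∈ H then χ (x * (g - 1) * y + 1) else 0

/-- Induction `Ind_H^G(χ)(g) = (1/|H|) Σ_{y∈G} χ̇(y⁻¹ g y)`. -/
def Ind {A : Type*} [Ring A] [Fintype A] (G H : Set A) (χ : A → ℂ) (g : A) : ℂ :=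
  ((setFinset H).card : ℂ)⁻¹ *
    ∑ y ∈ setFinset G,
      if Ring.inverse y * g * y ∈ H then χ (Ring.inverse y * g * y) else 0

/-- The block-diagonal subgroup `U_3 × U_2 ⊆ U_5` over `F_2`. -/
def U3xU2 : Set (Matrix (Fin 5) (Fin 5) (ZMod 2)) :=
  {u | (∀ i, u i i = 1) ∧
    ∀ i j, i ≠ j → u i j ≠ 0 → (i < j ∧ (j : ℕ) ≤ 2) ∨ (3 ≤ (i : ℕ) ∧ i < j)}

abbrev G5 : Set (Matrix (Fin 5) (Fin 5) (ZMod 2)) :=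
  patternGroup (ZMod 2) (fun i j : Fin 5 => i < j)

def mG (v : Fin 10 → ZMod 2) : Matrix (Fin 5) (Fin 5) (ZMod 2) :=
  !![1, v 0, v 1, v 2, v 3;
     0, 1,   v 4, v 5, v 6;
     0, 0,   1,   v 7, v 8;
     0, 0,   0,   1,   v 9;
     0, 0,   0,   0,   1]

def pG (u : Matrix (Fin 5) (Fin 5) (ZMod 2)) : Fin 10 → ZMod 2 :=
  ![u 0 1, u 0 2, u 0 3, u 0 4, u 1 2, u 1 3, u 1 4, u 2 3, u 2 4, u 3 4]

lemma pG_mG (v : Fin 10 → ZMod 2) : pG (mG v) = v := by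
  funext i; fin_cases i <;> rfl

lemma mG_inj : Function.Injective mG :=
  Function.LeftInverse.injective pG_mG

lemma mG_mem (v : Fin 10 → ZMod 2) : mG v ∈ G5 := by
  constructor
  · intro i; fin_cases i <;> rfl
  · intro i j hne hz
    fin_cases i <;> fin_cases j <;> first
      | (exact absurd rfl hne)
      | (exact absurd rfl hz)
      | decide

lemma mG_pG {u : Matrix (Fin 5) (Fin 5) (ZMod 2)} (hu : u ∈ G5) : mG (pG u) = u := by
  obtain ⟨h1, h2⟩ := hu
  have hz : ∀ i j : Fin 5, j < i → u i j = 0 := by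
    intro i j hij
    by_contra hne
    exact absurd (h2 i j hij.ne' hne) hij.asymm
  ext i j
  fin_cases i <;> fin_cases j <;>
    first
      | rfl
      | (exact (h1 _).symm)
      | (refine (hz _ _ ?_).symm; decide)

lemma G5_eq : setFinset G5 = Finset.image mG Finset.univ := by
  ext u
  simp only [setFinset, Finset.mem_filter, Finset.mem_univ, true_and, Finset.mem_image]
  constructor
  · intro hu; exact ⟨pG u, mG_pG hu⟩
  · rintro ⟨v, -, rfl⟩; exact mG_mem v

lemma cardG5 : (setFinset G5).card = 1024 := by
  rw [G5_eq, Finset.card_image_of_injective _ mG_inj, Finset.card_univ]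
  simp [Fintype.card_fun]

def mH (v : Fin 4 → ZMod 2) : Matrix (Fin 5) (Fin 5) (ZMod 2) :=
  !![1, v 0, v 1, 0, 0;
     0, 1,   v 2, 0, 0;
     0, 0,   1,   0, 0;
     0, 0,   0,   1, v 3;
     0, 0,   0,   0, 1]

def pH (u : Matrix (Fin 5) (Fin 5) (ZMod 2)) : Fin 4 → ZMod 2 :=
  ![u 0 1, u 0 2, u 1 2, u 3 4]

lemma pH_mH (v : Fin 4 → ZMod 2) : pH (mH v) = v := by
  funext i; fin_cases i <;> rfl

lemma mH_inj : Function.Injective mH :=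
  Function.LeftInverse.injective pH_mH

lemma mH_mem (v : Fin 4 → ZMod 2) : mH v ∈ U3xU2 := by
  constructor
  · intro i; fin_cases i <;> rfl
  · intro i j hne hz
    fin_cases i <;> fin_cases j <;> first
      | (exact absurd rfl hne)
      | (exact absurd rfl hz)
      | decide

lemma mH_pH {u : Matrix (Fin 5) (Fin 5) (ZMod 2)} (hu : u ∈ U3xU2) : mH (pH u) = u := by
  obtain ⟨h1, h2⟩ := hu
  have hz : ∀ i j : Fin 5, i ≠ j →
      ¬ ((i < j ∧ (j : ℕ) ≤ 2) ∨ (3 ≤ (i : ℕ) ∧ i < j)) → u i j = 0 := by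
    intro i j hne hP
    by_contra hnz
    exact hP (h2 i j hne hnz)
  ext i j
  fin_cases i <;> fin_cases j <;>
    first
      | rfl
      | (exact (h1 _).symm)
      | (refine (hz _ _ ?_ ?_).symm <;> decide)

lemma H_eq : setFinset U3xU2 = Finset.image mH Finset.univ := by
  ext u
  simp only [setFinset, Finset.mem_filter, Finset.mem_univ, true_and, Finset.mem_image]
  constructor
  · intro hu; exact ⟨pH u, mH_pH hu⟩
  · rintro ⟨v, -, rfl⟩; exact mH_mem v

lemma cardH : (setFinset U3xU2).card = 16 := by
  rw [H_eq, Finset.card_image_of_injective _ mH_inj, Finset.card_univ]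
  simp [Fintype.card_fun]

lemma mem_H_iff (A : Matrix (Fin 5) (Fin 5) (ZMod 2)) :
    A ∈ U3xU2 ↔
      (A 0 0 = 1 ∧ A 1 1 = 1 ∧ A 2 2 = 1 ∧ A 3 3 = 1 ∧ A 4 4 = 1) ∧
      (A 0 3 = 0 ∧ A 0 4 = 0 ∧ A 1 3 = 0 ∧ A 1 4 = 0 ∧ A 2 3 = 0 ∧ A 2 4 = 0) ∧
      (A 1 0 = 0 ∧ A 2 0 = 0 ∧ A 3 0 = 0 ∧ A 4 0 = 0 ∧ A 2 1 = 0 ∧ A 3 1 = 0 ∧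
       A 4 1 = 0 ∧ A 3 2 = 0 ∧ A 4 2 = 0 ∧ A 4 3 = 0) := by
  constructor
  · intro hu
    have h1 := hu.1
    have hz : ∀ i j : Fin 5, i ≠ j →
        ¬ ((i < j ∧ (j : ℕ) ≤ 2) ∨ (3 ≤ (i : ℕ) ∧ i < j)) → A i j = 0 := by
      intro i j hne hP
      by_contra hnz
      exact hP (hu.2 i j hne hnz)
    refine ⟨⟨h1 0, h1 1, h1 2, h1 3, h1 4⟩,
      ⟨?_, ?_, ?_, ?_, ?_, ?_⟩,
      ⟨?_, ?_, ?_, ?_, ?_, ?_, ?_, ?_, ?_, ?_⟩⟩ <;>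
      (refine hz _ _ ?_ ?_ <;> decide)
  · rintro ⟨⟨d0, d1, d2, d3, d4⟩, ⟨z1, z2, z3, z4, z5, z6⟩,
      ⟨l1, l2, l3, l4, l5, l6, l7, l8, l9, l10⟩⟩
    constructor
    · intro i; fin_cases i <;> assumption
    · intro i j hne hnz
      fin_cases i <;> fin_cases j <;> first
        | (exact absurd rfl hne)
        | decide
        | (simp_all)

def ka : Matrix (Fin 5) (Fin 5) (ZMod 2) :=
  !![1,0,0,0,0; 0,1,0,0,0; 0,0,1,0,0; 0,0,0,1,1; 0,0,0,0,1]

lemma cond_a (v w : Fin 10 → ZMod 2) :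
    (mG v * (ka - 1) * mG w + 1 ∈ U3xU2) ↔ (v 2 = 0 ∧ v 5 = 0 ∧ v 7 = 0) := by
  have hN : ka - 1 = !![0,0,0,0,0; 0,0,0,0,0; 0,0,0,0,0; 0,0,0,0,1; 0,0,0,0,0] := by decide
  rw [hN, mem_H_iff]
  simp [mG, Matrix.mul_apply, Fin.sum_univ_five, Matrix.add_apply, Matrix.one_apply, Matrix.vecHead, Matrix.vecTail]


def kb : Matrix (Fin 5) (Fin 5) (ZMod 2) :=
  !![1,0,0,0,0; 0,1,1,0,0; 0,0,1,0,0; 0,0,0,1,0; 0,0,0,0,1]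

lemma cond_b (v w : Fin 10 → ZMod 2) :
    (mG v * (kb - 1) * mG w + 1 ∈ U3xU2) ↔ (w 7 = 0 ∧ w 8 = 0) := by
  have hN : kb - 1 = !![0,0,0,0,0; 0,0,1,0,0; 0,0,0,0,0; 0,0,0,0,0; 0,0,0,0,0] := by decide
  rw [hN, mem_H_iff]
  simp [mG, Matrix.mul_apply, Fin.sum_univ_five, Matrix.add_apply, Matrix.one_apply, Matrix.vecHead, Matrix.vecTail]
  generalize v 0 = q0
  generalize w 7 = q1
  generalize w 8 = q2
  revert q0 q1 q2
  decide


def kc : Matrix (Fin 5) (Fin 5) (ZMod 2) :=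
  !![1,0,1,0,0; 0,1,0,0,0; 0,0,1,0,0; 0,0,0,1,0; 0,0,0,0,1]

lemma cond_c (v w : Fin 10 → ZMod 2) :
    (mG v * (kc - 1) * mG w + 1 ∈ U3xU2) ↔ (w 7 = 0 ∧ w 8 = 0) := by
  have hN : kc - 1 = !![0,0,1,0,0; 0,0,0,0,0; 0,0,0,0,0; 0,0,0,0,0; 0,0,0,0,0] := by decide
  rw [hN, mem_H_iff]
  simp [mG, Matrix.mul_apply, Fin.sum_univ_five, Matrix.add_apply, Matrix.one_apply, Matrix.vecHead, Matrix.vecTail]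


def kab : Matrix (Fin 5) (Fin 5) (ZMod 2) :=
  !![1,0,0,0,0; 0,1,1,0,0; 0,0,1,0,0; 0,0,0,1,1; 0,0,0,0,1]

lemma cond_ab (v w : Fin 10 → ZMod 2) :
    (mG v * (kab - 1) * mG w + 1 ∈ U3xU2) ↔ (w 7 = 0 ∧ v 7 = 0 ∧ v 5 = w 8 ∧ v 2 = v 0 * w 8) := by
  have hN : kab - 1 = !![0,0,0,0,0; 0,0,1,0,0; 0,0,0,0,0; 0,0,0,0,1; 0,0,0,0,0] := by decide
  rw [hN, mem_H_iff]
  simp [mG, Matrix.mul_apply, Fin.sum_univ_five, Matrix.add_apply, Matrix.one_apply, Matrix.vecHead, Matrix.vecTail]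
  generalize v 0 = q0
  generalize v 2 = q1
  generalize v 5 = q2
  generalize v 7 = q3
  generalize w 7 = q4
  generalize w 8 = q5
  revert q0 q1 q2 q3 q4 q5
  decide


def kac : Matrix (Fin 5) (Fin 5) (ZMod 2) :=
  !![1,0,1,0,0; 0,1,0,0,0; 0,0,1,0,0; 0,0,0,1,1; 0,0,0,0,1]

lemma cond_ac (v w : Fin 10 → ZMod 2) :
    (mG v * (kac - 1) * mG w + 1 ∈ U3xU2) ↔ (w 7 = 0 ∧ v 2 = w 8 ∧ v 5 = 0 ∧ v 7 = 0) := by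
  have hN : kac - 1 = !![0,0,1,0,0; 0,0,0,0,0; 0,0,0,0,0; 0,0,0,0,1; 0,0,0,0,0] := by decide
  rw [hN, mem_H_iff]
  simp [mG, Matrix.mul_apply, Fin.sum_univ_five, Matrix.add_apply, Matrix.one_apply, Matrix.vecHead, Matrix.vecTail]
  generalize v 2 = q0
  generalize v 5 = q1
  generalize v 7 = q2
  generalize w 7 = q3
  generalize w 8 = q4
  revert q0 q1 q2 q3 q4
  decide


def kbc : Matrix (Fin 5) (Fin 5) (ZMod 2) :=
  !![1,0,1,0,0; 0,1,1,0,0; 0,0,1,0,0; 0,0,0,1,0; 0,0,0,0,1]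

lemma cond_bc (v w : Fin 10 → ZMod 2) :
    (mG v * (kbc - 1) * mG w + 1 ∈ U3xU2) ↔ (w 7 = 0 ∧ w 8 = 0) := by
  have hN : kbc - 1 = !![0,0,1,0,0; 0,0,1,0,0; 0,0,0,0,0; 0,0,0,0,0; 0,0,0,0,0] := by decide
  rw [hN, mem_H_iff]
  simp [mG, Matrix.mul_apply, Fin.sum_univ_five, Matrix.add_apply, Matrix.one_apply, Matrix.vecHead, Matrix.vecTail]
  generalize v 0 = q0
  generalize w 7 = q1
  generalize w 8 = q2
  revert q0 q1 q2
  decide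


def kabc : Matrix (Fin 5) (Fin 5) (ZMod 2) :=
  !![1,0,1,0,0; 0,1,1,0,0; 0,0,1,0,0; 0,0,0,1,1; 0,0,0,0,1]

lemma cond_abc (v w : Fin 10 → ZMod 2) :
    (mG v * (kabc - 1) * mG w + 1 ∈ U3xU2) ↔ (w 7 = 0 ∧ v 5 = w 8 ∧ v 7 = 0 ∧ v 2 = (v 0 + 1) * w 8) := by
  have hN : kabc - 1 = !![0,0,1,0,0; 0,0,1,0,0; 0,0,0,0,0; 0,0,0,0,1; 0,0,0,0,0] := by decide
  rw [hN, mem_H_iff]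
  simp [mG, Matrix.mul_apply, Fin.sum_univ_five, Matrix.add_apply, Matrix.one_apply, Matrix.vecHead, Matrix.vecTail]
  generalize v 0 = q0
  generalize v 2 = q1
  generalize v 5 = q2
  generalize v 7 = q3
  generalize w 7 = q4
  generalize w 8 = q5
  revert q0 q1 q2 q3 q4 q5
  decide

abbrev V10 := Fin 10 → ZMod 2

lemma SInd_eq (k : Matrix (Fin 5) (Fin 5) (ZMod 2)) :
    SInd G5 U3xU2 (fun _ => 1) k =
      (16384 : ℂ)⁻¹ * ∑ v : V10, ∑ w : V10,
        (if mG v * (k - 1) * mG w + 1 ∈ U3xU2 then (1:ℂ) else 0) := by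
  unfold SInd
  rw [cardG5, cardH, G5_eq]
  simp only [Finset.sum_image (fun a _ b _ h => mG_inj h)]
  norm_num

set_option maxRecDepth 100000 in
lemma count_w : ((Finset.univ.filter (fun w : V10 => w 7 = 0 ∧ w 8 = 0)).card = 256)
    ∧ ((Finset.univ.filter (fun v : V10 => v 2 = 0 ∧ v 5 = 0 ∧ v 7 = 0)).card = 128)
    ∧ ((Finset.univ.filter (fun w : V10 => w 7 = 0)).card = 512) := by
  refine ⟨?_, ?_, ?_⟩ <;> decide

lemma SInd_one : SInd G5 U3xU2 (fun _ => 1) 1 = 64 := by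
  rw [SInd_eq]
  have h1 : (1 : Matrix (Fin 5) (Fin 5) (ZMod 2)) ∈ U3xU2 := by
    rw [mem_H_iff]; decide
  have : ∀ v w : V10, mG v * ((1:Matrix (Fin 5) (Fin 5) (ZMod 2)) - 1) * mG w + 1 ∈ U3xU2 := by
    intro v w; simpa using h1
  simp only [if_pos (this _ _)]
  simp [Finset.sum_const, Fintype.card_fun]
  norm_num

lemma SInd_a : SInd G5 U3xU2 (fun _ => 1) ka = 8 := by
  rw [SInd_eq]
  simp only [cond_a]
  have : ∀ v : V10, (∑ _w : V10, if v 2 = 0 ∧ v 5 = 0 ∧ v 7 = 0 then (1:ℂ) else 0)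
      = 1024 * (if v 2 = 0 ∧ v 5 = 0 ∧ v 7 = 0 then (1:ℂ) else 0) := by
    intro v
    rw [Finset.sum_const, Finset.card_univ]
    norm_num [Fintype.card_fun]
  rw [Finset.sum_congr rfl (fun v _ => this v), ← Finset.mul_sum, Finset.sum_boole,
    count_w.2.1]
  norm_num

lemma SInd_w_only (k : Matrix (Fin 5) (Fin 5) (ZMod 2))
    (hcond : ∀ v w : V10, (mG v * (k - 1) * mG w + 1 ∈ U3xU2) ↔ (w 7 = 0 ∧ w 8 = 0)) :
    SInd G5 U3xU2 (fun _ => 1) k = 16 := by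
  rw [SInd_eq]
  simp only [hcond]
  have h : ∀ v : V10, (∑ w : V10, if w 7 = 0 ∧ w 8 = 0 then (1:ℂ) else 0) = 256 := by
    intro _
    rw [Finset.sum_boole]
    rw [show (Finset.univ.filter (fun w : V10 => w 7 = 0 ∧ w 8 = 0)).card = 256 from count_w.1]
    norm_num
  rw [Finset.sum_congr rfl (fun v _ => h v), Finset.sum_const, Finset.card_univ]
  norm_num [Fintype.card_fun]

lemma SInd_b : SInd G5 U3xU2 (fun _ => 1) kb = 16 := SInd_w_only kb cond_b
lemma SInd_c : SInd G5 U3xU2 (fun _ => 1) kc = 16 := SInd_w_only kc cond_c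
lemma SInd_bc : SInd G5 U3xU2 (fun _ => 1) kbc = 16 := SInd_w_only kbc cond_bc

lemma SInd_mixed (k : Matrix (Fin 5) (Fin 5) (ZMod 2)) (D : V10 → V10 → Prop)
    [inst : ∀ v w, Decidable (D v w)]
    (hcond : ∀ v w : V10, (mG v * (k - 1) * mG w + 1 ∈ U3xU2) ↔ (w 7 = 0 ∧ D v w))
    (hcount : ∀ w : V10, (Finset.univ.filter (fun v => D v w)).card = 128) :
    SInd G5 U3xU2 (fun _ => 1) k = 4 := by
  rw [SInd_eq]
  simp only [hcond]
  rw [Finset.sum_comm]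
  have h : ∀ w : V10, (∑ v : V10, if w 7 = 0 ∧ D v w then (1:ℂ) else 0)
      = if w 7 = 0 then (128:ℂ) else 0 := by
    intro w
    by_cases h7 : w 7 = 0
    · simp only [h7, true_and, if_true]
      rw [Finset.sum_boole, hcount w]
      norm_num
    · simp [h7]
  rw [Finset.sum_congr rfl (fun w _ => h w)]
  have h2 : ∀ w : V10, (if w 7 = 0 then (128:ℂ) else 0) = 128 * (if w 7 = 0 then (1:ℂ) else 0) := by
    intro w; split <;> ring
  rw [Finset.sum_congr rfl (fun w _ => h2 w), ← Finset.mul_sum, Finset.sum_boole,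
    show (Finset.univ.filter (fun w : V10 => w 7 = 0)).card = 512 from count_w.2.2]
  norm_num

set_option maxRecDepth 100000 in
lemma SInd_ab : SInd G5 U3xU2 (fun _ => 1) kab = 4 := by
  refine SInd_mixed kab (fun v w => v 7 = 0 ∧ v 5 = w 8 ∧ v 2 = v 0 * w 8) cond_ab ?_
  intro w
  have key : ∀ c : ZMod 2, (Finset.univ.filter
      (fun v : V10 => v 7 = 0 ∧ v 5 = c ∧ v 2 = v 0 * c)).card = 128 := by decide
  exact key (w 8)

set_option maxRecDepth 100000 in
lemma SInd_ac : SInd G5 U3xU2 (fun _ => 1) kac = 4 := by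
  refine SInd_mixed kac (fun v w => v 2 = w 8 ∧ v 5 = 0 ∧ v 7 = 0) cond_ac ?_
  intro w
  have key : ∀ c : ZMod 2, (Finset.univ.filter
      (fun v : V10 => v 2 = c ∧ v 5 = 0 ∧ v 7 = 0)).card = 128 := by decide
  exact key (w 8)

set_option maxRecDepth 100000 in
lemma SInd_abc : SInd G5 U3xU2 (fun _ => 1) kabc = 4 := by
  refine SInd_mixed kabc (fun v w => v 5 = w 8 ∧ v 7 = 0 ∧ v 2 = (v 0 + 1) * w 8) cond_abc ?_
  intro w
  have key : ∀ c : ZMod 2, (Finset.univ.filter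
      (fun v : V10 => v 5 = c ∧ v 7 = 0 ∧ v 2 = (v 0 + 1) * c)).card = 128 := by decide
  exact key (w 8)

open Matrix in
lemma trace_idem {d : ℕ} (P : Matrix (Fin d) (Fin d) ℂ) (h : P * P = P) :
    ∃ r : ℕ, P.trace = r := by
  have hf : Matrix.toLin' P ∘ₗ Matrix.toLin' P = Matrix.toLin' P := by
    rw [← Matrix.toLin'_mul, h]
  obtain ⟨p, hp⟩ := (LinearMap.isProj_iff_isIdempotentElem _).mpr hf
  refine ⟨Module.finrank ℂ p, ?_⟩
  rw [← hp.trace, LinearMap.trace_eq_matrix_trace ℂ (Pi.basisFun ℂ (Fin d)),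
    LinearMap.toMatrix_eq_toMatrix', LinearMap.toMatrix'_toLin']

theorem superinduced_trivial_character_not_a_character :
    ¬ ∃ (d : ℕ) (ρ : Matrix (Fin 5) (Fin 5) (ZMod 2) → Matrix (Fin d) (Fin d) ℂ),
      (∀ u ∈ patternGroup (ZMod 2) (fun i j : Fin 5 => i < j),
        ∀ v ∈ patternGroup (ZMod 2) (fun i j : Fin 5 => i < j), ρ (u * v) = ρ u * ρ v) ∧
      ρ 1 = 1 ∧
      ∀ g ∈ patternGroup (ZMod 2) (fun i j : Fin 5 => i < j),
        SInd (patternGroup (ZMod 2) (fun i j : Fin 5 => i < j)) U3xU2 (fun _ => 1) g =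
          (ρ g).trace := by
  rintro ⟨d, ρ, hmul, hone, htr⟩
  -- memberships
  have m1 : (1 : Matrix (Fin 5) (Fin 5) (ZMod 2)) ∈ G5 := ⟨by decide, by intro i j hne hz; fin_cases i <;> fin_cases j <;> first | (exact absurd rfl hne) | (exact absurd rfl hz) | decide⟩
  have ma : ka ∈ G5 := ⟨by decide, by intro i j hne hz; fin_cases i <;> fin_cases j <;> first | (exact absurd rfl hne) | (exact absurd rfl hz) | decide⟩
  have mb : kb ∈ G5 := ⟨by decide, by intro i j hne hz; fin_cases i <;> fin_cases j <;> first | (exact absurd rfl hne) | (exact absurd rfl hz) | decide⟩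
  have mc : kc ∈ G5 := ⟨by decide, by intro i j hne hz; fin_cases i <;> fin_cases j <;> first | (exact absurd rfl hne) | (exact absurd rfl hz) | decide⟩
  have mbc : kbc ∈ G5 := ⟨by decide, by intro i j hne hz; fin_cases i <;> fin_cases j <;> first | (exact absurd rfl hne) | (exact absurd rfl hz) | decide⟩
  -- products
  have pab : ka * kb = kab := by decide
  have pac : ka * kc = kac := by decide
  have pbc : kb * kc = kbc := by decide
  have pabc : ka * kbc = kabc := by decide
  have pba : kb * ka = kab := by decide
  have pca : kc * ka = kac := by decide
  have pcb : kc * kb = kbc := by decide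
  have paa : ka * ka = 1 := by decide
  have pbb : kb * kb = 1 := by decide
  have pcc : kc * kc = 1 := by decide
  set A := ρ ka with hA'
  set B := ρ kb with hB'
  set C := ρ kc with hC'
  have hAA : A * A = 1 := by rw [← hmul ka ma ka ma, paa, hone]
  have hBB : B * B = 1 := by rw [← hmul kb mb kb mb, pbb, hone]
  have hCC : C * C = 1 := by rw [← hmul kc mc kc mc, pcc, hone]
  have hAB : A * B = B * A := by
    rw [← hmul ka ma kb mb, ← hmul kb mb ka ma, pab, pba]
  have hAC : A * C = C * A := by
    rw [← hmul ka ma kc mc, ← hmul kc mc ka ma, pac, pca]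
  have hBC : B * C = C * B := by
    rw [← hmul kb mb kc mc, ← hmul kc mc kb mb, pbc, pcb]
  -- traces
  have t1 : (1 : Matrix (Fin d) (Fin d) ℂ).trace = 64 := by
    rw [← hone, ← htr 1 m1, SInd_one]
  have tA : A.trace = 8 := by rw [hA', ← htr ka ma, SInd_a]
  have tB : B.trace = 16 := by rw [hB', ← htr kb mb, SInd_b]
  have tC : C.trace = 16 := by rw [hC', ← htr kc mc, SInd_c]
  have tAB : (A * B).trace = 4 := by
    rw [← hmul ka ma kb mb, pab, ← htr kab (by exact ⟨by decide, by intro i j hne hz; fin_cases i <;> fin_cases j <;> first | (exact absurd rfl hne) | (exact absurd rfl hz) | decide⟩), SInd_ab]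
  have tAC : (A * C).trace = 4 := by
    rw [← hmul ka ma kc mc, pac, ← htr kac (by exact ⟨by decide, by intro i j hne hz; fin_cases i <;> fin_cases j <;> first | (exact absurd rfl hne) | (exact absurd rfl hz) | decide⟩), SInd_ac]
  have tBC : (B * C).trace = 16 := by
    rw [← hmul kb mb kc mc, pbc, ← htr kbc mbc, SInd_bc]
  have tABC : (A * (B * C)).trace = 4 := by
    rw [← hmul kb mb kc mc, pbc, ← hmul ka ma kbc mbc, pabc,
      ← htr kabc (by exact ⟨by decide, by intro i j hne hz; fin_cases i <;> fin_cases j <;> first | (exact absurd rfl hne) | (exact absurd rfl hz) | decide⟩), SInd_abc]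
  -- the idempotent
  set e1 : Matrix (Fin d) (Fin d) ℂ := 1 + A with he1'
  set e2 : Matrix (Fin d) (Fin d) ℂ := 1 + B with he2'
  set e3 : Matrix (Fin d) (Fin d) ℂ := 1 + C with he3'
  have he1 : e1 * e1 = (2:ℂ) • e1 := by
    rw [he1', add_mul, mul_add, mul_add, hAA]
    simp only [mul_one, one_mul]
    rw [two_smul]; abel
  have he2 : e2 * e2 = (2:ℂ) • e2 := by
    rw [he2', add_mul, mul_add, mul_add, hBB]
    simp only [mul_one, one_mul]
    rw [two_smul]; abel
  have he3 : e3 * e3 = (2:ℂ) • e3 := by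
    rw [he3', add_mul, mul_add, mul_add, hCC]
    simp only [mul_one, one_mul]
    rw [two_smul]; abel
  have c21 : e2 * e1 = e1 * e2 := by
    rw [he1', he2', add_mul, add_mul, mul_add, mul_add, mul_add, mul_add]
    simp only [mul_one, one_mul]
    rw [← hAB]
    abel
  have c31 : e3 * e1 = e1 * e3 := by
    rw [he1', he3', add_mul, add_mul, mul_add, mul_add, mul_add, mul_add]
    simp only [mul_one, one_mul]
    rw [← hAC]
    abel
  have c32 : e3 * e2 = e2 * e3 := by
    rw [he2', he3', add_mul, add_mul, mul_add, mul_add, mul_add, mul_add]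
    simp only [mul_one, one_mul]
    rw [← hBC]
    abel
  set X : Matrix (Fin d) (Fin d) ℂ := e1 * (e2 * e3) with hX'
  have hXX : X * X = (8:ℂ) • X := by
    have swap31 : ∀ t, e3 * (e1 * t) = e1 * (e3 * t) := by
      intro t; rw [← mul_assoc, c31, mul_assoc]
    have swap21 : ∀ t, e2 * (e1 * t) = e1 * (e2 * t) := by
      intro t; rw [← mul_assoc, c21, mul_assoc]
    have swap32 : ∀ t, e3 * (e2 * t) = e2 * (e3 * t) := by
      intro t; rw [← mul_assoc, c32, mul_assoc]
    calc X * X = e1 * (e2 * (e3 * (e1 * (e2 * e3)))) := by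
          rw [hX']; simp only [mul_assoc]
      _ = e1 * (e2 * (e1 * (e3 * (e2 * e3)))) := by rw [swap31]
      _ = e1 * (e1 * (e2 * (e3 * (e2 * e3)))) := by rw [swap21]
      _ = e1 * (e1 * (e2 * (e2 * (e3 * e3)))) := by rw [swap32]
      _ = (8:ℂ) • X := by
          rw [← mul_assoc e1 e1, he1, ← mul_assoc e2 e2, he2, he3, hX']
          simp only [smul_mul_assoc, mul_smul_comm, smul_smul]
          norm_num
  set P : Matrix (Fin d) (Fin d) ℂ := (8:ℂ)⁻¹ • X with hP'
  have hPP : P * P = P := by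
    rw [hP', smul_mul_assoc, mul_smul_comm, hXX, smul_smul, smul_smul]
    norm_num
  obtain ⟨r, hr⟩ := trace_idem P hPP
  have htrX : X.trace = 132 := by
    have hexp : X = 1 + A + B + C + A * B + A * C + B * C + A * (B * C) := by
      rw [hX', he1', he2', he3']
      noncomm_ring
    rw [hexp]
    simp only [Matrix.trace_add, t1, tA, tB, tC, tAB, tAC, tBC, tABC]
    norm_num
  rw [hP', Matrix.trace_smul, htrX] at hr
  have hr' : (r : ℂ) = 33 / 2 := by
    rw [← hr, smul_eq_mul]
    norm_num
  have h2r : ((2 * r : ℕ) : ℂ) = 33 := by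
    push_cast [hr']
    ring
  have : 2 * r = 33 := by exact_mod_cast h2r
  omega
end
end

section
/- Embed U_{n−1} in U_n as {u ∈ U_n : u_{ij} ≠ 0 for i ≠ j implies i < j < n}. Let μ ∈ n_{n−1}^* and let V^μ be the U_{n−1}-supermodule with basis {v_ν : ν ∈ U_{n−1}μ} and action u·v_ν = θ(ν(u^{−1}−1)) v_{uν}. Then the induced module Ind_{U_{n−1}}^{U_n}(V^μ) = ℂU_n ⊗_{ℂU_{n−1}} V^μ is isomorphic, as a ℂU_n-module, to the ℂ-vector space with basis {v_λ : λ ∈ n_n^*, λ|_{n_{n−1}} ∈ U_{n−1}μ} and U_n-action u·v_λ = θ(λ(u^{−1}−1)) v_{uλ}, where λ|_{n_{n−1}} denotes the restriction of λ to n_{n−1} and U_{n−1}μ is the left orbit of μ. -/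
/-!
STATEMENT 14: Embed U_{n−1} in U_n as {u ∈ U_n : u_{ij} ≠ 0, i ≠ j ⟹ i < j < n}.
Let μ ∈ n_{n−1}^* and let V^μ be the U_{n−1}-supermodule with basis
{v_ν : ν ∈ U_{n−1}μ} and action u·v_ν = θ(ν(u⁻¹−1)) v_{uν}.  Then
Ind_{U_{n−1}}^{U_n}(V^μ) = ℂU_n ⊗_{ℂU_{n−1}} V^μ is isomorphic as a ℂU_n-module to
the ℂ-vector space with basis {v_λ : λ ∈ n_n^*, λ|_{n_{n−1}} ∈ U_{n−1}μ} and action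
u·v_λ = θ(λ(u⁻¹−1)) v_{uλ}.

Here the tensor product ℂU_n ⊗_{ℂU_{n−1}} V^μ is presented concretely as the quotient
of the free ℂ-vector space on pairs (g, ν) by the ℂU_{n−1}-balancing relations
(g·h, ν) − θ(ν(h⁻¹−1))·(g, h·ν)  (g ∈ U_n, h ∈ U_{n−1}, ν ∈ U_{n−1}μ), together with
the basis vectors (g, ν) with g ∉ U_n or ν ∉ U_{n−1}μ; U_n acts by u·(g, ν) = (u·g, ν).
The target has basis indexed by {λ : λ supported strictly above the diagonal and
λ|_{n_{n−1}} ∈ U_{n−1}μ}, realized as the space of ℂ-valued functions on that basis,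
and "isomorphic as ℂU_n-modules" is expressed by a ℂ-linear equivalence intertwining
the two U_n-actions.
-/

open scoped Classical

noncomputable section

open Matrix

/-- The pairing `⟪a,b⟫ = Σ_{ij} a_{ij} b_{ij}`, identifying a matrix `a` with the
linear functional `b ↦ ⟪a,b⟫`. -/
def pairF {F : Type*} [Field F] {n : ℕ} (a b : Matrix (Fin n) (Fin n) F) : F :=
  ∑ i, ∑ j, a i j * b i j

/-- Projection of a matrix onto the entries supported on `P` (the matrix model of
restricting a functional to `n_P`). -/
def dproj {F : Type*} [Field F] {n : ℕ} (P : Fin n → Fin n → Prop)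
    (m : Matrix (Fin n) (Fin n) F) : Matrix (Fin n) (Fin n) F :=
  Matrix.of fun i j => if P i j then m i j else 0

/-- The left action `u·λ`, via `(uλ)(x−1) = λ(u⁻¹(x−1))`, in the matrix model:
`uλ = proj_P((u⁻¹)ᵀ λ)`. -/
def lact {F : Type*} [Field F] {n : ℕ} (P : Fin n → Fin n → Prop)
    (u lam : Matrix (Fin n) (Fin n) F) : Matrix (Fin n) (Fin n) F :=
  dproj P ((Ring.inverse u)ᵀ * lam)

/-- The right action `λ·v`, via `(λv)(x−1) = λ((x−1)v⁻¹)`:  `λv = proj_P(λ (v⁻¹)ᵀ)`. -/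
def ract {F : Type*} [Field F] {n : ℕ} (P : Fin n → Fin n → Prop)
    (lam v : Matrix (Fin n) (Fin n) F) : Matrix (Fin n) (Fin n) F :=
  dproj P (lam * (Ring.inverse v)ᵀ)

/-- The two-sided action `u·λ·v = proj_P((u⁻¹)ᵀ λ (v⁻¹)ᵀ)`. -/
def biact {F : Type*} [Field F] {n : ℕ} (P : Fin n → Fin n → Prop)
    (u lam v : Matrix (Fin n) (Fin n) F) : Matrix (Fin n) (Fin n) F :=
  dproj P ((Ring.inverse u)ᵀ * lam * (Ring.inverse v)ᵀ)

/-- The left orbit `U_P·λ`. -/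
def leftOrbit (F : Type*) [Field F] {n : ℕ} (P : Fin n → Fin n → Prop)
    (lam : Matrix (Fin n) (Fin n) F) : Set (Matrix (Fin n) (Fin n) F) :=
  {m | ∃ u ∈ patternGroup F P, m = lact P u lam}

/-- The right orbit `λ·U_P`. -/
def rightOrbit (F : Type*) [Field F] {n : ℕ} (P : Fin n → Fin n → Prop)
    (lam : Matrix (Fin n) (Fin n) F) : Set (Matrix (Fin n) (Fin n) F) :=
  {m | ∃ v ∈ patternGroup F P, m = ract P lam v}

/-- The two-sided orbit `U_P·λ·U_P`. -/
def biOrbit (F : Type*) [Field F] {n : ℕ} (P : Fin n → Fin n → Prop)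
    (lam : Matrix (Fin n) (Fin n) F) : Set (Matrix (Fin n) (Fin n) F) :=
  {m | ∃ u ∈ patternGroup F P, ∃ v ∈ patternGroup F P, m = biact P u lam v}

/-- The supercharacter
`χ^λ(u) = (|U_P λ|/|U_P λ U_P|) Σ_{μ ∈ U_P(−λ)U_P} θ(μ(u−1))`. -/
def superchar {F : Type*} [Field F] [Fintype F] {n : ℕ} (P : Fin n → Fin n → Prop)
    (θ : F → ℂ) (lam : Matrix (Fin n) (Fin n) F) (u : Matrix (Fin n) (Fin n) F) : ℂ :=
  (((setFinset (leftOrbit F P lam)).card : ℂ) / ((setFinset (biOrbit F P lam)).card : ℂ)) *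
    ∑ ν ∈ setFinset (biOrbit F P (-lam)), θ (pairF ν (u - 1))

variable {F : Type*} [Field F] [Fintype F] {n : ℕ}

/-- The subgroup `U_{n−1} ⊆ U_n` (1-based condition `i < j < n`). -/
def Psub (n : ℕ) : Fin n → Fin n → Prop := fun i j => i < j ∧ (j : ℕ) + 1 < n

/-- The set indexing the basis of the target module: functionals `λ ∈ n_n^*` whose
restriction to `n_{n−1}` lies in the orbit `U_{n−1}μ`. -/
def TSet (F : Type*) [Field F] [Fintype F] (n : ℕ) (mu : Matrix (Fin n) (Fin n) F) :
    Set (Matrix (Fin n) (Fin n) F) :=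
  {lam | (∀ i j, lam i j ≠ 0 → i < j) ∧ dproj (Psub n) lam ∈ leftOrbit F (Psub n) mu}

/-- The free ℂ-vector space on pairs `(g, ν)` of matrices. -/
abbrev FreeW (F : Type*) [Field F] (n : ℕ) :=
  (Matrix (Fin n) (Fin n) F × Matrix (Fin n) (Fin n) F) →₀ ℂ

/-- The submodule of balancing relations presenting `ℂU_n ⊗_{ℂU_{n−1}} V^μ`:
`(g·h, ν) − θ(ν(h⁻¹−1))·(g, h·ν)`, together with the irrelevant basis vectors. -/
def RelMod (F : Type*) [Field F] [Fintype F] (n : ℕ) (θ : F → ℂ)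
    (mu : Matrix (Fin n) (Fin n) F) : Submodule ℂ (FreeW F n) :=
  Submodule.span ℂ
    ({w | ∃ g ∈ patternGroup F (fun i j : Fin n => i < j),
        ∃ h ∈ patternGroup F (Psub n), ∃ ν ∈ leftOrbit F (Psub n) mu,
          w = Finsupp.single (g * h, ν) 1 -
              θ (pairF ν (Ring.inverse h - 1)) • Finsupp.single (g, lact (Psub n) h ν) 1} ∪
     {w | ∃ p : Matrix (Fin n) (Fin n) F × Matrix (Fin n) (Fin n) F,
        ¬ (p.1 ∈ patternGroup F (fun i j : Fin n => i < j) ∧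
            p.2 ∈ leftOrbit F (Psub n) mu) ∧ w = Finsupp.single p 1})

/-- The induced module `ℂU_n ⊗_{ℂU_{n−1}} V^μ`, presented as a quotient of the free
vector space on pairs. -/
abbrev IndMod (F : Type*) [Field F] [Fintype F] (n : ℕ) (θ : F → ℂ)
    (mu : Matrix (Fin n) (Fin n) F) :=
  FreeW F n ⧸ RelMod F n θ mu

/-- The action of `u ∈ U_n` on the free vector space on pairs: `u·(g, ν) = (u·g, ν)`. -/
def freeAct (F : Type*) [Field F] [Fintype F] (n : ℕ) (u : Matrix (Fin n) (Fin n) F) :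
    FreeW F n →ₗ[ℂ] FreeW F n :=
  Finsupp.lmapDomain ℂ ℂ (fun p => (u * p.1, p.2))

/-- The action of `u ∈ U_n` on the target space with basis
`{v_λ : λ ∈ n_n^*, λ|_{n_{n−1}} ∈ U_{n−1}μ}`, i.e. `u·v_λ = θ(λ(u⁻¹−1)) v_{uλ}`,
written in coordinates. -/
def targetAct (F : Type*) [Field F] [Fintype F] (n : ℕ) (θ : F → ℂ)
    (mu : Matrix (Fin n) (Fin n) F) (u : Matrix (Fin n) (Fin n) F)
    (f : {lam // lam ∈ TSet F n mu} → ℂ) : {lam // lam ∈ TSet F n mu} → ℂ :=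
  fun lam' => ∑ lam : {lam // lam ∈ TSet F n mu},
    if lact (fun i j : Fin n => i < j) u lam.val = lam'.val
    then θ (pairF lam.val (Ring.inverse u - 1)) * f lam else 0


/-! ### Auxiliary lemmas -/

section Aux
open Matrix

variable {F : Type*} [Field F] {n : ℕ}

lemma theta_zero {θ : F → ℂ} (hθadd : ∀ a b, θ (a + b) = θ a * θ b)
    (hθne : ∀ a, θ a ≠ 0) : θ 0 = 1 := by
  have h := hθadd 0 0
  rw [add_zero] at h
  have := mul_left_cancel₀ (hθne 0) (by rw [mul_one, ← h] : θ 0 * 1 = θ 0 * θ 0)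
  exact this.symm

lemma suppP_mul {P : Fin n → Fin n → Prop}
    (htrans : ∀ ⦃i j k : Fin n⦄, P i k → P k j → P i j)
    {a b : Matrix (Fin n) (Fin n) F}
    (ha : ∀ i j, a i j ≠ 0 → P i j) (hb : ∀ i j, b i j ≠ 0 → P i j) :
    ∀ i j, (a * b) i j ≠ 0 → P i j := by
  intro i j hij
  rw [Matrix.mul_apply] at hij
  obtain ⟨k, -, hk⟩ := Finset.exists_ne_zero_of_sum_ne_zero hij
  exact htrans (ha _ _ (left_ne_zero_of_mul hk)) (hb _ _ (right_ne_zero_of_mul hk))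

lemma pg_mono {P Q : Fin n → Fin n → Prop} (h : ∀ ⦃i j : Fin n⦄, P i j → Q i j)
    {u : Matrix (Fin n) (Fin n) F} (hu : u ∈ patternGroup F P) :
    u ∈ patternGroup F Q :=
  ⟨hu.1, fun i j hij h0 => h (hu.2 i j hij h0)⟩

lemma pg_one {P : Fin n → Fin n → Prop} : (1 : Matrix (Fin n) (Fin n) F) ∈ patternGroup F P :=
  ⟨fun i => Matrix.one_apply_eq i, fun i j hij h0 => absurd (Matrix.one_apply_ne hij) h0⟩

lemma pg_mul_mem {P : Fin n → Fin n → Prop}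
    (hlt : ∀ ⦃i j : Fin n⦄, P i j → i < j)
    (htrans : ∀ ⦃i j k : Fin n⦄, P i k → P k j → P i j)
    {u v : Matrix (Fin n) (Fin n) F}
    (hu : u ∈ patternGroup F P) (hv : v ∈ patternGroup F P) :
    u * v ∈ patternGroup F P := by
  obtain ⟨hu1, hu2⟩ := hu
  obtain ⟨hv1, hv2⟩ := hv
  constructor
  · intro i
    rw [Matrix.mul_apply, Finset.sum_eq_single i]
    · rw [hu1 i, hv1 i, one_mul]
    · intro k _ hk
      by_cases h0 : u i k = 0
      · rw [h0, zero_mul]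
      · have h1 := hlt (hu2 i k (Ne.symm hk) h0)
        by_cases h2 : v k i = 0
        · rw [h2, mul_zero]
        · exact absurd (lt_trans h1 (hlt (hv2 k i hk h2))) (lt_irrefl i)
    · intro h; exact absurd (Finset.mem_univ i) h
  · intro i j hij h0
    rw [Matrix.mul_apply] at h0
    obtain ⟨k, -, hk⟩ := Finset.exists_ne_zero_of_sum_ne_zero h0
    have hu' := left_ne_zero_of_mul hk
    have hv' := right_ne_zero_of_mul hk
    by_cases hki : k = i
    · subst hki
      exact hv2 k j hij hv'
    · by_cases hkj : k = j
      · subst hkj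
        exact hu2 i k hij hu'
      · exact htrans (hu2 i k (fun h => hki h.symm) hu') (hv2 k j hkj hv')

lemma strictUpper_pow {N : Matrix (Fin n) (Fin n) F}
    (hN : ∀ i j : Fin n, ¬ i < j → N i j = 0) :
    ∀ (k : ℕ) (i j : Fin n), (j : ℕ) < (i : ℕ) + k → (N ^ k) i j = 0 := by
  intro k
  induction k with
  | zero =>
    intro i j h
    rw [pow_zero]
    exact Matrix.one_apply_ne (by intro he; subst he; omega)
  | succ k ih =>
    intro i j h
    rw [pow_succ, Matrix.mul_apply]
    apply Finset.sum_eq_zero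
    intro m _
    by_cases hm : (m : ℕ) < (i : ℕ) + k
    · rw [ih i m hm, zero_mul]
    · have : ¬ m < j := by rw [Fin.lt_def]; omega
      rw [hN m j this, mul_zero]

lemma strictUpper_pow_n {N : Matrix (Fin n) (Fin n) F}
    (hN : ∀ i j : Fin n, ¬ i < j → N i j = 0) : N ^ n = 0 := by
  ext i j
  rw [Matrix.zero_apply]
  exact strictUpper_pow hN n i j (by omega)

lemma rinv_eq_of_mul {M₀ : Type*} [MonoidWithZero M₀] {u w : M₀}
    (h1 : u * w = 1) (h2 : w * u = 1) : Ring.inverse u = w := by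
  have hu : IsUnit u := ⟨⟨u, w, h1, h2⟩, rfl⟩
  calc Ring.inverse u = Ring.inverse u * (u * w) := by rw [h1, mul_one]
  _ = (Ring.inverse u * u) * w := by rw [mul_assoc]
  _ = w := by rw [Ring.inverse_mul_cancel _ hu, one_mul]

lemma rinv_mul {M₀ : Type*} [MonoidWithZero M₀] {u v : M₀}
    (hu : IsUnit u) (hv : IsUnit v) :
    Ring.inverse (u * v) = Ring.inverse v * Ring.inverse u := by
  apply rinv_eq_of_mul
  · rw [mul_assoc, ← mul_assoc v, Ring.mul_inverse_cancel _ hv, one_mul,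
      Ring.mul_inverse_cancel _ hu]
  · rw [mul_assoc, ← mul_assoc (Ring.inverse u), Ring.inverse_mul_cancel _ hu, one_mul,
      Ring.inverse_mul_cancel _ hv]

lemma pg_strictUpper {P : Fin n → Fin n → Prop}
    (hlt : ∀ ⦃i j : Fin n⦄, P i j → i < j)
    {u : Matrix (Fin n) (Fin n) F} (hu : u ∈ patternGroup F P) :
    ∀ i j : Fin n, ¬ i < j → (1 - u) i j = 0 := by
  intro i j h
  by_cases hij : i = j
  · subst hij
    rw [Matrix.sub_apply, Matrix.one_apply_eq, hu.1 i, sub_self]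
  · rw [Matrix.sub_apply, Matrix.one_apply_ne hij]
    by_cases h0 : u i j = 0
    · rw [h0, sub_zero]
    · exact absurd (hlt (hu.2 i j hij h0)) h

lemma pg_mul_geom {P : Fin n → Fin n → Prop}
    (hlt : ∀ ⦃i j : Fin n⦄, P i j → i < j)
    {u : Matrix (Fin n) (Fin n) F} (hu : u ∈ patternGroup F P) :
    u * (∑ k ∈ Finset.range n, (1 - u) ^ k) = 1 ∧
      (∑ k ∈ Finset.range n, (1 - u) ^ k) * u = 1 := by
  have hxn : (1 - u) ^ n = 0 := strictUpper_pow_n (pg_strictUpper hlt hu)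
  have h1 := geom_sum_mul (1 - u) n
  have h2 := mul_geom_sum (1 - u) n
  rw [hxn] at h1 h2
  have hsub : (1 - u) - 1 = -u := sub_sub_cancel_left 1 u
  rw [hsub] at h1 h2
  constructor
  · have := congrArg Neg.neg h2
    rw [neg_mul, neg_neg, zero_sub, neg_neg] at this
    exact this
  · have := congrArg Neg.neg h1
    rw [mul_neg, neg_neg, zero_sub, neg_neg] at this
    exact this

lemma pg_isUnit {P : Fin n → Fin n → Prop}
    (hlt : ∀ ⦃i j : Fin n⦄, P i j → i < j)
    {u : Matrix (Fin n) (Fin n) F} (hu : u ∈ patternGroup F P) : IsUnit u := by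
  obtain ⟨h1, h2⟩ := pg_mul_geom hlt hu
  exact ⟨⟨u, _, h1, h2⟩, rfl⟩

lemma pg_rinv_eq {P : Fin n → Fin n → Prop}
    (hlt : ∀ ⦃i j : Fin n⦄, P i j → i < j)
    {u : Matrix (Fin n) (Fin n) F} (hu : u ∈ patternGroup F P) :
    Ring.inverse u = ∑ k ∈ Finset.range n, (1 - u) ^ k := by
  obtain ⟨h1, h2⟩ := pg_mul_geom hlt hu
  exact rinv_eq_of_mul h1 h2

lemma pg_inv_mem {P : Fin n → Fin n → Prop}
    (hlt : ∀ ⦃i j : Fin n⦄, P i j → i < j)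
    (htrans : ∀ ⦃i j k : Fin n⦄, P i k → P k j → P i j)
    {u : Matrix (Fin n) (Fin n) F} (hu : u ∈ patternGroup F P) :
    Ring.inverse u ∈ patternGroup F P := by
  rw [pg_rinv_eq hlt hu]
  set x : Matrix (Fin n) (Fin n) F := 1 - u with hx
  have hxsupp : ∀ i j, x i j ≠ 0 → P i j := by
    intro i j h0
    by_contra hP
    by_cases hij : i = j
    · subst hij
      exact h0 (by rw [hx, Matrix.sub_apply, Matrix.one_apply_eq, hu.1 i, sub_self])
    · apply h0
      rw [hx, Matrix.sub_apply, Matrix.one_apply_ne hij]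
      by_cases hz : u i j = 0
      · rw [hz, sub_zero]
      · exact absurd (hu.2 i j hij hz) hP
  have hpow : ∀ k : ℕ, ∀ i j, (x ^ (k + 1)) i j ≠ 0 → P i j := by
    intro k
    induction k with
    | zero => simpa [pow_one] using hxsupp
    | succ k ih =>
      have : x ^ (k + 1 + 1) = x ^ (k + 1) * x := by rw [pow_succ]
      rw [this]
      exact suppP_mul htrans ih hxsupp
  constructor
  · intro i
    rw [Matrix.sum_apply, Finset.sum_eq_single 0]
    · rw [pow_zero, Matrix.one_apply_eq]
    · intro k _ hk
      obtain ⟨m, rfl⟩ := Nat.exists_eq_succ_of_ne_zero hk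
      by_contra h0
      exact absurd (hlt (hpow m i i h0)) (lt_irrefl i)
    · intro h
      exact absurd (Finset.mem_range.2 i.pos) h
  · intro i j hij h0
    rw [Matrix.sum_apply] at h0
    obtain ⟨k, -, hk⟩ := Finset.exists_ne_zero_of_sum_ne_zero h0
    match k with
    | 0 => exact absurd (by rw [pow_zero]; exact Matrix.one_apply_ne hij) hk
    | m + 1 => exact hpow m i j hk

end Aux

section Aux2
open Matrix

variable {F : Type*} [Field F] {n : ℕ}

lemma dproj_apply (P : Fin n → Fin n → Prop) (m : Matrix (Fin n) (Fin n) F) (i j : Fin n) :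
    dproj P m i j = if P i j then m i j else 0 := rfl

lemma dproj_supp (P : Fin n → Fin n → Prop) (m : Matrix (Fin n) (Fin n) F) :
    ∀ i j, dproj P m i j ≠ 0 → P i j := by
  intro i j h
  rw [dproj_apply] at h
  by_contra hP
  rw [if_neg hP] at h
  exact h rfl

lemma dproj_dproj {P Q : Fin n → Fin n → Prop} (h : ∀ ⦃i j : Fin n⦄, Q i j → P i j)
    (m : Matrix (Fin n) (Fin n) F) : dproj Q (dproj P m) = dproj Q m := by
  ext i j
  rw [dproj_apply, dproj_apply, dproj_apply]
  by_cases hq : Q i j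
  · rw [if_pos hq, if_pos hq, if_pos (h hq)]
  · rw [if_neg hq, if_neg hq]

lemma dproj_eq_self {P : Fin n → Fin n → Prop} {m : Matrix (Fin n) (Fin n) F}
    (h : ∀ i j, m i j ≠ 0 → P i j) : dproj P m = m := by
  ext i j
  rw [dproj_apply]
  by_cases hp : P i j
  · rw [if_pos hp]
  · rw [if_neg hp]
    by_contra h0
    exact hp (h i j (fun he => h0 he.symm))

lemma pairF_eq_of_dproj {P : Fin n → Fin n → Prop} {m : Matrix (Fin n) (Fin n) F}
    (hm : ∀ i j, m i j ≠ 0 → P i j) (a : Matrix (Fin n) (Fin n) F) :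
    pairF (dproj P a) m = pairF a m := by
  unfold pairF
  apply Finset.sum_congr rfl
  intro i _
  apply Finset.sum_congr rfl
  intro j _
  rw [dproj_apply]
  by_cases hp : P i j
  · rw [if_pos hp]
  · rw [if_neg hp]
    by_cases h0 : m i j = 0
    · rw [h0, mul_zero, mul_zero]
    · exact absurd (hm i j h0) hp

lemma pairF_transpose (A lam m : Matrix (Fin n) (Fin n) F) :
    pairF (Aᵀ * lam) m = pairF lam (A * m) := by
  unfold pairF
  have lhs : ∀ i j : Fin n, (Aᵀ * lam) i j * m i j = ∑ k, A k i * lam k j * m i j := by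
    intro i j
    rw [Matrix.mul_apply, Finset.sum_mul]
    exact Finset.sum_congr rfl fun k _ => by rw [Matrix.transpose_apply]
  have rhs : ∀ k j : Fin n, lam k j * (A * m) k j = ∑ i, A k i * lam k j * m i j := by
    intro k j
    rw [Matrix.mul_apply, Finset.mul_sum]
    exact Finset.sum_congr rfl fun i _ => by ring
  calc ∑ i, ∑ j, (Aᵀ * lam) i j * m i j
      = ∑ i, ∑ j, ∑ k, A k i * lam k j * m i j :=
        Finset.sum_congr rfl fun i _ => Finset.sum_congr rfl fun j _ => lhs i j
    _ = ∑ i, ∑ k, ∑ j, A k i * lam k j * m i j :=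
        Finset.sum_congr rfl fun i _ => Finset.sum_comm
    _ = ∑ k, ∑ i, ∑ j, A k i * lam k j * m i j := Finset.sum_comm
    _ = ∑ k, ∑ j, ∑ i, A k i * lam k j * m i j :=
        Finset.sum_congr rfl fun k _ => Finset.sum_comm
    _ = ∑ k, ∑ j, lam k j * (A * m) k j :=
        Finset.sum_congr rfl fun k _ => Finset.sum_congr rfl fun j _ => (rhs k j).symm

lemma pairF_add_right (a m₁ m₂ : Matrix (Fin n) (Fin n) F) :
    pairF a (m₁ + m₂) = pairF a m₁ + pairF a m₂ := by
  unfold pairF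
  rw [← Finset.sum_add_distrib]
  apply Finset.sum_congr rfl
  intro i _
  rw [← Finset.sum_add_distrib]
  apply Finset.sum_congr rfl
  intro j _
  rw [Matrix.add_apply, mul_add]

lemma pairF_sub_left (a b m : Matrix (Fin n) (Fin n) F) :
    pairF (a - b) m = pairF a m - pairF b m := by
  unfold pairF
  rw [← Finset.sum_sub_distrib]
  apply Finset.sum_congr rfl
  intro i _
  rw [← Finset.sum_sub_distrib]
  apply Finset.sum_congr rfl
  intro j _
  rw [Matrix.sub_apply, sub_mul]

lemma pairF_neg_right (a m : Matrix (Fin n) (Fin n) F) :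
    pairF a (-m) = - pairF a m := by
  unfold pairF
  rw [← Finset.sum_neg_distrib]
  apply Finset.sum_congr rfl
  intro i _
  rw [← Finset.sum_neg_distrib]
  apply Finset.sum_congr rfl
  intro j _
  rw [Matrix.neg_apply, mul_neg]

lemma dproj_mul_dproj {P : Fin n → Fin n → Prop}
    (hP : ∀ ⦃i j k : Fin n⦄, P i j → k ≤ i → P k j)
    {L : Matrix (Fin n) (Fin n) F} (hL : ∀ i k, L i k ≠ 0 → k ≤ i)
    (M : Matrix (Fin n) (Fin n) F) :
    dproj P (L * dproj P M) = dproj P (L * M) := by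
  ext i j
  rw [dproj_apply, dproj_apply]
  by_cases hp : P i j
  · rw [if_pos hp, if_pos hp, Matrix.mul_apply, Matrix.mul_apply]
    apply Finset.sum_congr rfl
    intro k _
    by_cases h0 : L i k = 0
    · rw [h0, zero_mul, zero_mul]
    · rw [dproj_apply, if_pos (hP hp (hL i k h0))]
  · rw [if_neg hp, if_neg hp]

lemma lact_supp (P : Fin n → Fin n → Prop) (u lam : Matrix (Fin n) (Fin n) F) :
    ∀ i j, lact P u lam i j ≠ 0 → P i j := dproj_supp P _

lemma lact_one (P : Fin n → Fin n → Prop) (lam : Matrix (Fin n) (Fin n) F) :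
    lact P 1 lam = dproj P lam := by
  unfold lact
  rw [Ring.inverse_one, Matrix.transpose_one, one_mul]

lemma pg_inv_lower {u : Matrix (Fin n) (Fin n) F}
    (hu : u ∈ patternGroup F (fun i j : Fin n => i < j)) :
    ∀ i k : Fin n, ((Ring.inverse u)ᵀ) i k ≠ 0 → k ≤ i := by
  have hinv := pg_inv_mem (P := fun i j : Fin n => i < j)
    (fun i j h => h) (fun i j k h1 h2 => lt_trans h1 h2) hu
  intro i k h0
  rw [Matrix.transpose_apply] at h0
  by_cases hki : k = i
  · exact le_of_eq hki
  · exact le_of_lt (hinv.2 k i hki h0)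

lemma lact_mul {P : Fin n → Fin n → Prop}
    (hP : ∀ ⦃i j k : Fin n⦄, P i j → k ≤ i → P k j)
    {u v : Matrix (Fin n) (Fin n) F}
    (hu : u ∈ patternGroup F (fun i j : Fin n => i < j))
    (hv : v ∈ patternGroup F (fun i j : Fin n => i < j))
    (lam : Matrix (Fin n) (Fin n) F) :
    lact P (u * v) lam = lact P u (lact P v lam) := by
  unfold lact
  have hlt : ∀ ⦃i j : Fin n⦄, (fun i j : Fin n => i < j) i j → i < j := fun i j h => h
  rw [rinv_mul (pg_isUnit hlt hu) (pg_isUnit hlt hv), Matrix.transpose_mul,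
    dproj_mul_dproj hP (pg_inv_lower hu), mul_assoc]

end Aux2

section Aux3
open Matrix

variable {F : Type*} [Field F] {n : ℕ}

lemma Pf_lt : ∀ ⦃i j : Fin n⦄, i < j → i < j := fun _ _ h => h

lemma Pf_trans : ∀ ⦃i j k : Fin n⦄, i < k → k < j → i < j := fun _ _ _ h1 h2 => lt_trans h1 h2

lemma Pf_col : ∀ ⦃i j k : Fin n⦄, i < j → k ≤ i → k < j := fun _ _ _ h hk => lt_of_le_of_lt hk h

lemma Psub_lt : ∀ ⦃i j : Fin n⦄, Psub n i j → i < j := fun _ _ h => h.1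

lemma Psub_trans : ∀ ⦃i j k : Fin n⦄, Psub n i k → Psub n k j → Psub n i j :=
  fun _ _ _ h1 h2 => ⟨lt_trans h1.1 h2.1, h2.2⟩

lemma Psub_col : ∀ ⦃i j k : Fin n⦄, Psub n i j → k ≤ i → Psub n k j :=
  fun _ _ _ h hk => ⟨lt_of_le_of_lt hk h.1, h.2⟩

/-- The strictly-upper "last column" matrix with entries `x i` at `(i, n-1)`, `i ≠ n-1`. -/
def colC (x : Fin n → F) : Matrix (Fin n) (Fin n) F :=
  Matrix.of fun i j => if (j : ℕ) = n - 1 ∧ (i : ℕ) ≠ n - 1 then x i else 0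

/-- The transvection-like matrix `1 + colC x`. -/
def acol (x : Fin n → F) : Matrix (Fin n) (Fin n) F := 1 + colC x

lemma colC_apply (x : Fin n → F) (i j : Fin n) :
    colC x i j = if (j : ℕ) = n - 1 ∧ (i : ℕ) ≠ n - 1 then x i else 0 := rfl

lemma colC_mul_colC (x y : Fin n → F) : colC x * colC y = 0 := by
  ext i j
  rw [Matrix.mul_apply, Matrix.zero_apply]
  apply Finset.sum_eq_zero
  intro k _
  by_cases h1 : (k : ℕ) = n - 1 ∧ (i : ℕ) ≠ n - 1
  · have : colC y k j = 0 := by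
      rw [colC_apply, if_neg]
      intro hc
      exact hc.2 h1.1
    rw [this, mul_zero]
  · rw [colC_apply, if_neg h1, zero_mul]

lemma acol_mul_oneSub (x : Fin n → F) : acol x * (1 - colC x) = 1 := by
  unfold acol
  rw [add_mul, one_mul, mul_sub, mul_one, colC_mul_colC, sub_zero]
  abel

lemma oneSub_mul_acol (x : Fin n → F) : (1 - colC x) * acol x = 1 := by
  unfold acol
  rw [sub_mul, one_mul, mul_add, mul_one, colC_mul_colC, add_zero]
  abel

lemma rinv_acol (x : Fin n → F) : Ring.inverse (acol x) = 1 - colC x :=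
  rinv_eq_of_mul (acol_mul_oneSub x) (oneSub_mul_acol x)

lemma acol_mem (x : Fin n → F) : acol x ∈ patternGroup F (fun i j : Fin n => i < j) := by
  constructor
  · intro i
    rw [acol, Matrix.add_apply, Matrix.one_apply_eq, colC_apply, if_neg, add_zero]
    intro hc
    exact hc.2 hc.1
  · intro i j hij h0
    rw [acol, Matrix.add_apply, Matrix.one_apply_ne hij, zero_add, colC_apply] at h0
    by_cases hc : (j : ℕ) = n - 1 ∧ (i : ℕ) ≠ n - 1
    · have h1 : (i : ℕ) < n := i.isLt
      show (i : ℕ) < (j : ℕ)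
      omega
    · rw [if_neg hc] at h0
      exact absurd rfl h0

lemma oneSubColC_transpose_mul (x : Fin n → F) (M : Matrix (Fin n) (Fin n) F)
    (i j : Fin n) (hi : (i : ℕ) ≠ n - 1) :
    ((((1 : Matrix (Fin n) (Fin n) F) - colC x))ᵀ * M) i j = M i j := by
  rw [Matrix.mul_apply]
  have h1 : ∀ k : Fin n, (((1 : Matrix (Fin n) (Fin n) F) - colC x)ᵀ) i k * M k j =
      (1 : Matrix (Fin n) (Fin n) F) k i * M k j := by
    intro k
    rw [Matrix.transpose_apply, Matrix.sub_apply, colC_apply, if_neg (fun hc => hi hc.1), sub_zero]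
  rw [Finset.sum_congr rfl fun k _ => h1 k, Finset.sum_eq_single i]
  · rw [Matrix.one_apply_eq, one_mul]
  · intro k _ hk
    rw [Matrix.one_apply_ne hk, zero_mul]
  · intro h; exact absurd (Finset.mem_univ i) h

lemma lact_acol {x : Fin n → F} {lam : Matrix (Fin n) (Fin n) F}
    (hlam : ∀ i j, lam i j ≠ 0 → i < j) :
    lact (fun i j : Fin n => i < j) (acol x) lam = lam := by
  unfold lact
  rw [rinv_acol]
  ext i j
  rw [dproj_apply]
  by_cases hij : i < j
  · rw [if_pos hij]
    have hij' : (i : ℕ) < (j : ℕ) := hij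
    have hi : (i : ℕ) ≠ n - 1 := by
      have := j.isLt
      omega
    exact oneSubColC_transpose_mul x lam i j hi
  · rw [if_neg hij]
    by_contra h0
    exact hij (hlam i j fun he => h0 he.symm)

lemma dproj_Psub_acolinv (x : Fin n → F) (M : Matrix (Fin n) (Fin n) F) :
    dproj (Psub n) ((Ring.inverse (acol x))ᵀ * M) = dproj (Psub n) M := by
  rw [rinv_acol]
  ext i j
  rw [dproj_apply, dproj_apply]
  by_cases hp : Psub n i j
  · rw [if_pos hp, if_pos hp]
    have h1 : (i : ℕ) < (j : ℕ) := hp.1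
    have h2 : (j : ℕ) + 1 < n := hp.2
    exact oneSubColC_transpose_mul x M i j (by omega)
  · rw [if_neg hp, if_neg hp]

lemma orbit_dproj {mu ν : Matrix (Fin n) (Fin n) F} (h : ν ∈ leftOrbit F (Psub n) mu) :
    dproj (Psub n) ν = ν := by
  obtain ⟨u, hu, rfl⟩ := h
  exact dproj_dproj (fun i j hq => hq) _

lemma orbit_supp {mu ν : Matrix (Fin n) (Fin n) F} (h : ν ∈ leftOrbit F (Psub n) mu) :
    ∀ i j, ν i j ≠ 0 → Psub n i j := by
  rw [← orbit_dproj h]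
  exact dproj_supp _ _

lemma orbit_lact {mu ν h : Matrix (Fin n) (Fin n) F}
    (hh : h ∈ patternGroup F (Psub n)) (hν : ν ∈ leftOrbit F (Psub n) mu) :
    lact (Psub n) h ν ∈ leftOrbit F (Psub n) mu := by
  obtain ⟨w, hw, rfl⟩ := hν
  exact ⟨h * w, pg_mul_mem Psub_lt Psub_trans hh hw,
    (lact_mul Psub_col (pg_mono Psub_lt hh) (pg_mono Psub_lt hw) mu).symm⟩

lemma dproj_lact_Psub {h lam : Matrix (Fin n) (Fin n) F}
    (hh : h ∈ patternGroup F (Psub n)) :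
    dproj (Psub n) (lact (fun i j : Fin n => i < j) h lam) =
      lact (Psub n) h (dproj (Psub n) lam) := by
  unfold lact
  rw [dproj_dproj Psub_lt, dproj_mul_dproj Psub_col (pg_inv_lower (pg_mono Psub_lt hh))]

lemma decomp (hn : 0 < n) {g : Matrix (Fin n) (Fin n) F}
    (hg : g ∈ patternGroup F (fun i j : Fin n => i < j)) :
    ∃ x : Fin n → F, ∃ h ∈ patternGroup F (Psub n), g = acol x * h ∧
      ∀ i : Fin n, x i = g i ⟨n - 1, by omega⟩ := by
  have hlastval : (n : ℕ) - 1 < n := by omega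
  refine ⟨fun i => g i ⟨n - 1, hlastval⟩, (1 - colC (fun i => g i ⟨n - 1, hlastval⟩)) * g,
    ?_, ?_, fun i => rfl⟩
  · -- membership
    set last : Fin n := ⟨n - 1, hlastval⟩ with hlast
    set x : Fin n → F := fun i => g i last with hxdef
    have hrow : ∀ j : Fin n, j ≠ last → g last j = 0 := by
      intro j hj
      by_contra h0
      have h2 : (last : ℕ) < (j : ℕ) := hg.2 last j (fun he => hj he.symm) h0
      have := j.isLt
      simp only [hlast] at h2
      omega
    have hC : ∀ i j : Fin n, ((1 - colC x) * g) i j = g i j - colC x i last * g last j := by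
      intro i j
      rw [Matrix.mul_apply]
      have h1 : ∀ k : Fin n, (1 - colC x) i k * g k j =
          (1 : Matrix (Fin n) (Fin n) F) i k * g k j - colC x i k * g k j := by
        intro k
        rw [Matrix.sub_apply, sub_mul]
      rw [Finset.sum_congr rfl fun k _ => h1 k, Finset.sum_sub_distrib]
      have e1 : ∑ k, (1 : Matrix (Fin n) (Fin n) F) i k * g k j = g i j := by
        have : ((1 : Matrix (Fin n) (Fin n) F) * g) i j = g i j := by rw [one_mul]
        rw [Matrix.mul_apply] at this
        exact this
      have e2 : ∑ k, colC x i k * g k j = colC x i last * g last j := by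
        refine Finset.sum_eq_single last ?_ ?_
        · intro k _ hk
          have hck : colC x i k = 0 := by
            rw [colC_apply, if_neg]
            intro hcond
            exact hk (Fin.ext (by rw [hcond.1, hlast]))
          rw [hck, zero_mul]
        · intro habs; exact absurd (Finset.mem_univ last) habs
      rw [e1, e2]
    constructor
    · intro i
      rw [hC]
      by_cases hi : i = last
      · rw [hi]
        have hcc : colC x last last = 0 := by
          rw [colC_apply, if_neg]
          intro hc
          exact hc.2 hc.1
        rw [hcc, zero_mul, sub_zero, hg.1]
      · rw [hrow i hi, mul_zero, sub_zero, hg.1]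
    · intro i j hij h0
      rw [hC] at h0
      by_cases hj : j = last
      · rw [hj] at h0
        have hi' : (i : ℕ) ≠ n - 1 := by
          intro hival
          exact hij (Fin.ext (by rw [hival, hj, hlast]))
        have hcc : colC x i last = x i := by
          rw [colC_apply, if_pos ⟨by rw [hlast], hi'⟩]
        rw [hcc, hg.1, mul_one] at h0
        exact absurd (sub_self (g i last)) h0
      · rw [hrow j hj, mul_zero, sub_zero] at h0
        have hlt : (i : ℕ) < (j : ℕ) := hg.2 i j hij h0
        refine ⟨hlt, ?_⟩
        have h1 : (j : ℕ) < n := j.isLt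
        have h2 : (j : ℕ) ≠ n - 1 := fun hc => hj (Fin.ext (by rw [hc, hlast]))
        omega
  · -- equation
    rw [← mul_assoc, acol_mul_oneSub, one_mul]

lemma TSet_lact [Fintype F] {mu : Matrix (Fin n) (Fin n) F} (hn : 0 < n)
    {u lam : Matrix (Fin n) (Fin n) F}
    (hu : u ∈ patternGroup F (fun i j : Fin n => i < j)) (hlam : lam ∈ TSet F n mu) :
    lact (fun i j : Fin n => i < j) u lam ∈ TSet F n mu := by
  obtain ⟨xx, h, hh, hgh, -⟩ := decomp hn hu
  constructor
  · exact lact_supp _ _ _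
  · rw [hgh, lact_mul Pf_col (acol_mem xx) (pg_mono Psub_lt hh)]
    show dproj (Psub n) (dproj (fun i j : Fin n => i < j)
      ((Ring.inverse (acol xx))ᵀ * lact (fun i j : Fin n => i < j) h lam)) ∈ _
    rw [dproj_dproj Psub_lt, dproj_Psub_acolinv, dproj_lact_Psub hh]
    exact orbit_lact hh hlam.2

end Aux3

section Aux4
open Matrix

variable {F : Type*} [Field F] [Fintype F] {n : ℕ}

/-- Indicator (in coordinates) of the set of extensions of `ν`. -/
def Emap (mu ν : Matrix (Fin n) (Fin n) F) : {lam // lam ∈ TSet F n mu} → ℂ :=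
  fun l => if dproj (Psub n) l.val = ν then 1 else 0

lemma pg_sub_one_supp {P : Fin n → Fin n → Prop} {u : Matrix (Fin n) (Fin n) F}
    (hu : u ∈ patternGroup F P) : ∀ i j, (u - 1) i j ≠ 0 → P i j := by
  intro i j h0
  by_cases hij : i = j
  · subst hij
    rw [Matrix.sub_apply, Matrix.one_apply_eq, hu.1 i, sub_self] at h0
    exact absurd rfl h0
  · rw [Matrix.sub_apply, Matrix.one_apply_ne hij, sub_zero] at h0
    exact hu.2 i j hij h0

lemma targetAct_zero (θ : F → ℂ) (mu : Matrix (Fin n) (Fin n) F)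
    (u : Matrix (Fin n) (Fin n) F) : targetAct F n θ mu u 0 = 0 := by
  funext l'
  unfold targetAct
  rw [Pi.zero_apply]
  apply Finset.sum_eq_zero
  intro l _
  rw [Pi.zero_apply, mul_zero, ite_self]

lemma targetAct_add (θ : F → ℂ) (mu : Matrix (Fin n) (Fin n) F)
    (u : Matrix (Fin n) (Fin n) F) (f g : {lam // lam ∈ TSet F n mu} → ℂ) :
    targetAct F n θ mu u (f + g) = targetAct F n θ mu u f + targetAct F n θ mu u g := by
  funext l'
  unfold targetAct
  rw [Pi.add_apply, ← Finset.sum_add_distrib]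
  apply Finset.sum_congr rfl
  intro l _
  by_cases hc : lact (fun i j : Fin n => i < j) u l.val = l'.val
  · rw [if_pos hc, if_pos hc, if_pos hc, Pi.add_apply, mul_add]
  · rw [if_neg hc, if_neg hc, if_neg hc, add_zero]

lemma targetAct_smul (θ : F → ℂ) (mu : Matrix (Fin n) (Fin n) F)
    (u : Matrix (Fin n) (Fin n) F) (c : ℂ) (f : {lam // lam ∈ TSet F n mu} → ℂ) :
    targetAct F n θ mu u (c • f) = c • targetAct F n θ mu u f := by
  funext l'
  unfold targetAct
  rw [Pi.smul_apply, smul_eq_mul, Finset.mul_sum]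
  apply Finset.sum_congr rfl
  intro l _
  by_cases hc : lact (fun i j : Fin n => i < j) u l.val = l'.val
  · rw [if_pos hc, if_pos hc, Pi.smul_apply, smul_eq_mul]; ring
  · rw [if_neg hc, if_neg hc, mul_zero]

lemma theta_cocycle {θ : F → ℂ} (hθadd : ∀ a b, θ (a + b) = θ a * θ b)
    {u v : Matrix (Fin n) (Fin n) F} (lam : Matrix (Fin n) (Fin n) F)
    (hu : u ∈ patternGroup F (fun i j : Fin n => i < j))
    (hv : v ∈ patternGroup F (fun i j : Fin n => i < j)) :
    θ (pairF (lact (fun i j : Fin n => i < j) v lam) (Ring.inverse u - 1)) *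
      θ (pairF lam (Ring.inverse v - 1)) =
    θ (pairF lam (Ring.inverse (u * v) - 1)) := by
  have hinvu := pg_inv_mem Pf_lt Pf_trans hu
  have step1 : pairF (lact (fun i j : Fin n => i < j) v lam) (Ring.inverse u - 1)
      = pairF ((Ring.inverse v)ᵀ * lam) (Ring.inverse u - 1) :=
    pairF_eq_of_dproj (pg_sub_one_supp hinvu) _
  rw [step1, pairF_transpose, ← hθadd, ← pairF_add_right, mul_sub, mul_one,
    sub_add_sub_cancel, rinv_mul (pg_isUnit Pf_lt hu) (pg_isUnit Pf_lt hv)]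

lemma targetAct_mul (hn : 0 < n) {θ : F → ℂ} (hθadd : ∀ a b, θ (a + b) = θ a * θ b)
    (mu : Matrix (Fin n) (Fin n) F) {u v : Matrix (Fin n) (Fin n) F}
    (hu : u ∈ patternGroup F (fun i j : Fin n => i < j))
    (hv : v ∈ patternGroup F (fun i j : Fin n => i < j))
    (f : {lam // lam ∈ TSet F n mu} → ℂ) :
    targetAct F n θ mu u (targetAct F n θ mu v f) = targetAct F n θ mu (u * v) f := by
  funext l''
  unfold targetAct
  have step : ∀ l' : {lam // lam ∈ TSet F n mu},
      (if lact (fun i j : Fin n => i < j) u l'.val = l''.val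
        then θ (pairF l'.val (Ring.inverse u - 1)) *
          (∑ l : {lam // lam ∈ TSet F n mu},
            if lact (fun i j : Fin n => i < j) v l.val = l'.val
            then θ (pairF l.val (Ring.inverse v - 1)) * f l else 0) else 0)
      = ∑ l : {lam // lam ∈ TSet F n mu},
          (if lact (fun i j : Fin n => i < j) u l'.val = l''.val
            then θ (pairF l'.val (Ring.inverse u - 1)) *
              (if lact (fun i j : Fin n => i < j) v l.val = l'.val
                then θ (pairF l.val (Ring.inverse v - 1)) * f l else 0) else 0) := by
    intro l'
    by_cases hc : lact (fun i j : Fin n => i < j) u l'.val = l''.val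
    · rw [if_pos hc, Finset.mul_sum]
      exact Finset.sum_congr rfl fun l _ => by rw [if_pos hc]
    · rw [if_neg hc]
      exact (Finset.sum_eq_zero fun l _ => by rw [if_neg hc]).symm
  rw [Finset.sum_congr rfl fun l' _ => step l', Finset.sum_comm]
  apply Finset.sum_congr rfl
  intro l _
  have hs : lact (fun i j : Fin n => i < j) v l.val ∈ TSet F n mu := TSet_lact hn hv l.2
  rw [Finset.sum_eq_single (⟨lact (fun i j : Fin n => i < j) v l.val, hs⟩ :
      {lam // lam ∈ TSet F n mu})]
  · have hcomp : lact (fun i j : Fin n => i < j) u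
        (lact (fun i j : Fin n => i < j) v l.val) =
        lact (fun i j : Fin n => i < j) (u * v) l.val :=
      (lact_mul Pf_col hu hv l.val).symm
    rw [if_pos rfl]
    by_cases hcond : lact (fun i j : Fin n => i < j) (u * v) l.val = l''.val
    · rw [if_pos (by rw [hcomp]; exact hcond), if_pos hcond, ← mul_assoc,
        theta_cocycle hθadd l.val hu hv]
    · rw [if_neg (by rw [hcomp]; exact hcond), if_neg hcond]
  · intro l' _ hl'
    have : ¬ lact (fun i j : Fin n => i < j) v l.val = l'.val := by
      intro hc
      exact hl' (Subtype.ext hc).symm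
    rw [if_neg this, mul_zero, ite_self]
  · intro habs; exact absurd (Finset.mem_univ _) habs

lemma targetAct_E (hn : 0 < n) {θ : F → ℂ} (mu : Matrix (Fin n) (Fin n) F)
    {h ν : Matrix (Fin n) (Fin n) F}
    (hh : h ∈ patternGroup F (Psub n)) (hν : ν ∈ leftOrbit F (Psub n) mu) :
    targetAct F n θ mu h (Emap mu ν) =
      θ (pairF ν (Ring.inverse h - 1)) • Emap mu (lact (Psub n) h ν) := by
  have hhPf : h ∈ patternGroup F (fun i j : Fin n => i < j) := pg_mono Psub_lt hh
  have hinvPf : Ring.inverse h ∈ patternGroup F (fun i j : Fin n => i < j) :=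
    pg_inv_mem Pf_lt Pf_trans hhPf
  have hinvSub : Ring.inverse h ∈ patternGroup F (Psub n) :=
    pg_inv_mem Psub_lt Psub_trans hh
  funext l''
  have hl0 : lact (fun i j : Fin n => i < j) (Ring.inverse h) l''.val ∈ TSet F n mu :=
    TSet_lact hn hinvPf l''.2
  set l0 : {lam // lam ∈ TSet F n mu} :=
    ⟨lact (fun i j : Fin n => i < j) (Ring.inverse h) l''.val, hl0⟩ with hl0def
  have key1 : lact (fun i j : Fin n => i < j) h l0.val = l''.val := by
    rw [hl0def, ← lact_mul Pf_col hhPf hinvPf, Ring.mul_inverse_cancel _ (pg_isUnit Pf_lt hhPf),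
      lact_one, dproj_eq_self l''.2.1]
  have key2 : ∀ l : {lam // lam ∈ TSet F n mu}, l ≠ l0 →
      ¬ lact (fun i j : Fin n => i < j) h l.val = l''.val := by
    intro l hl hc
    apply hl
    apply Subtype.ext
    have : l.val = lact (fun i j : Fin n => i < j) (Ring.inverse h)
        (lact (fun i j : Fin n => i < j) h l.val) := by
      rw [← lact_mul Pf_col hinvPf hhPf, Ring.inverse_mul_cancel _ (pg_isUnit Pf_lt hhPf),
        lact_one, dproj_eq_self l.2.1]
    rw [this, hc]
  unfold targetAct Emap
  rw [Finset.sum_eq_single l0]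
  · rw [if_pos key1, Pi.smul_apply, smul_eq_mul]
    by_cases hcase : dproj (Psub n) l0.val = ν
    · have e1 : pairF l0.val (Ring.inverse h - 1) = pairF ν (Ring.inverse h - 1) := by
        rw [← hcase]
        exact (pairF_eq_of_dproj (pg_sub_one_supp hinvSub) _).symm
      have e2 : dproj (Psub n) l''.val = lact (Psub n) h ν := by
        rw [← key1, dproj_lact_Psub hh, hcase]
      rw [if_pos hcase, if_pos e2, e1, mul_one]
    · have e2 : ¬ dproj (Psub n) l''.val = lact (Psub n) h ν := by
        intro hcontra
        apply hcase
        have hval : l0.val = lact (fun i j : Fin n => i < j) (Ring.inverse h) l''.val := rfl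
        rw [hval, dproj_lact_Psub hinvSub, hcontra,
          ← lact_mul Psub_col hinvPf hhPf, Ring.inverse_mul_cancel _ (pg_isUnit Pf_lt hhPf),
          lact_one, orbit_dproj hν]
      rw [if_neg hcase, if_neg e2, mul_zero, mul_zero]
  · intro l _ hl
    rw [if_neg (key2 l hl)]
  · intro habs; exact absurd (Finset.mem_univ _) habs

lemma targetAct_acol {θ : F → ℂ} (mu : Matrix (Fin n) (Fin n) F) (x : Fin n → F)
    (ν : Matrix (Fin n) (Fin n) F) :
    targetAct F n θ mu (acol x) (Emap mu ν) = fun l' =>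
      if dproj (Psub n) l'.val = ν
      then θ (pairF l'.val (Ring.inverse (acol x) - 1)) else 0 := by
  funext l'
  unfold targetAct Emap
  rw [Finset.sum_eq_single l']
  · rw [if_pos (lact_acol l'.2.1)]
    by_cases hc : dproj (Psub n) l'.val = ν
    · rw [if_pos hc, if_pos hc, mul_one]
    · rw [if_neg hc, if_neg hc, mul_zero]
  · intro l _ hl
    have hfix : lact (fun i j : Fin n => i < j) (acol x) l.val = l.val := lact_acol l.2.1
    rw [if_neg (fun hc => hl (Subtype.ext (hfix ▸ hc)))]
  · intro habs; exact absurd (Finset.mem_univ _) habs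

lemma char_sum {θ : F → ℂ} (hθadd : ∀ a b, θ (a + b) = θ a * θ b)
    (hθne : ∀ a, θ a ≠ 0) (hθnt : ∃ a, θ a ≠ 1) (c : Fin n → F) :
    ∑ x : Fin n → F, θ (∑ i, c i * x i) =
      if c = 0 then ((Fintype.card F : ℂ) ^ n) else 0 := by
  by_cases hc : c = 0
  · subst hc
    rw [if_pos rfl]
    have : ∀ x : Fin n → F, θ (∑ i, (0 : Fin n → F) i * x i) = 1 := by
      intro x
      simp only [Pi.zero_apply, zero_mul, Finset.sum_const_zero]
      exact theta_zero hθadd hθne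
    rw [Finset.sum_congr rfl fun x _ => this x, Finset.sum_const, Finset.card_univ,
      nsmul_eq_mul, mul_one, Fintype.card_fun, Fintype.card_fin, Nat.cast_pow]
  · rw [if_neg hc]
    have hex : ∃ i, c i ≠ 0 := by
      by_contra hall
      push_neg at hall
      exact hc (funext fun i => hall i)
    obtain ⟨i₀, hi₀⟩ := hex
    obtain ⟨a, ha⟩ := hθnt
    set sft : Fin n → F := fun i => if i = i₀ then (c i₀)⁻¹ * a else 0 with hsft
    have hasum : ∑ i, c i * sft i = a := by
      rw [Finset.sum_eq_single i₀]
      · have hv : sft i₀ = (c i₀)⁻¹ * a := by rw [hsft]; exact if_pos rfl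
        rw [hv, ← mul_assoc, mul_inv_cancel₀ hi₀, one_mul]
      · intro k _ hk
        have hv : sft k = 0 := by rw [hsft]; exact if_neg hk
        rw [hv, mul_zero]
      · intro habs; exact absurd (Finset.mem_univ _) habs
    have hshift : ∑ x : Fin n → F, θ (∑ i, c i * x i)
        = ∑ x : Fin n → F, θ (∑ i, c i * (x i + sft i)) := by
      rw [← Equiv.sum_comp (Equiv.addRight sft) (fun y => θ (∑ i, c i * y i))]
      apply Finset.sum_congr rfl
      intro x _
      congr 1
    have hsplit : ∀ x : Fin n → F,
        θ (∑ i, c i * (x i + sft i)) = θ (∑ i, c i * x i) * θ a := by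
      intro x
      have : ∑ i, c i * (x i + sft i) = (∑ i, c i * x i) + ∑ i, c i * sft i := by
        rw [← Finset.sum_add_distrib]
        exact Finset.sum_congr rfl fun i _ => mul_add _ _ _
      rw [this, hasum, hθadd]
    have key : (∑ x : Fin n → F, θ (∑ i, c i * x i))
        = (∑ x : Fin n → F, θ (∑ i, c i * x i)) * θ a := by
      conv_lhs => rw [hshift]
      rw [Finset.sum_congr rfl fun x _ => hsplit x, ← Finset.sum_mul]
    have h2 : (∑ x : Fin n → F, θ (∑ i, c i * x i)) * (θ a - 1) = 0 := by
      rw [mul_sub, mul_one, ← key, sub_self]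
    rcases mul_eq_zero.1 h2 with h3 | h3
    · exact h3
    · exact absurd (sub_eq_zero.1 h3) ha

lemma pairF_colC (hn : 0 < n) (m : Matrix (Fin n) (Fin n) F) (x : Fin n → F) :
    pairF m (colC x) =
      ∑ i : Fin n, (if (i : ℕ) ≠ n - 1 then m i ⟨n - 1, by omega⟩ else 0) * x i := by
  unfold pairF
  apply Finset.sum_congr rfl
  intro i _
  rw [Finset.sum_eq_single (⟨n - 1, by omega⟩ : Fin n)]
  · rw [colC_apply]
    by_cases hi : (i : ℕ) ≠ n - 1
    · rw [if_pos ⟨rfl, hi⟩, if_pos hi]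
    · rw [if_neg (fun hcond => hi hcond.2), if_neg hi, zero_mul, mul_zero]
  · intro j _ hj
    have : colC x i j = 0 := by
      rw [colC_apply, if_neg (fun hcond => hj (Fin.ext (by rw [hcond.1])))]
    rw [this, mul_zero]
  · intro habs; exact absurd (Finset.mem_univ _) habs

lemma tset_ext (hn : 0 < n) {mu a b : Matrix (Fin n) (Fin n) F}
    (ha : a ∈ TSet F n mu) (hb : b ∈ TSet F n mu)
    (hd : dproj (Psub n) a = dproj (Psub n) b)
    (hcol : ∀ i : Fin n, (i : ℕ) ≠ n - 1 → a i ⟨n - 1, by omega⟩ = b i ⟨n - 1, by omega⟩) :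
    a = b := by
  ext i j
  by_cases hij : i < j
  · by_cases hjn : (j : ℕ) + 1 < n
    · have hp : Psub n i j := ⟨hij, hjn⟩
      have h3 : dproj (Psub n) a i j = dproj (Psub n) b i j := by rw [hd]
      rw [dproj_apply, dproj_apply, if_pos hp, if_pos hp] at h3
      exact h3
    · have hjval : (j : ℕ) = n - 1 := by have := j.isLt; omega
      have hival : (i : ℕ) ≠ n - 1 := by
        have hlt : (i : ℕ) < (j : ℕ) := hij
        omega
      have hjeq : j = ⟨n - 1, by omega⟩ := Fin.ext hjval
      rw [hjeq]
      exact hcol i hival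
  · have h1 : a i j = 0 := by
      by_contra h0
      exact hij (ha.1 i j h0)
    have h2 : b i j = 0 := by
      by_contra h0
      exact hij (hb.1 i j h0)
    rw [h1, h2]

end Aux4

section Aux5
open Matrix

variable {F : Type*} [Field F] [Fintype F] {n : ℕ}

lemma dproj_add (P : Fin n → Fin n → Prop) (a b : Matrix (Fin n) (Fin n) F) :
    dproj P (a + b) = dproj P a + dproj P b := by
  ext i j
  rw [Matrix.add_apply, dproj_apply, dproj_apply, dproj_apply]
  by_cases hp : P i j
  · rw [if_pos hp, if_pos hp, if_pos hp, Matrix.add_apply]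
  · rw [if_neg hp, if_neg hp, if_neg hp, add_zero]

lemma dproj_Psub_colC (x : Fin n → F) : dproj (Psub n) (colC x) = 0 := by
  ext i j
  rw [dproj_apply, Matrix.zero_apply]
  by_cases hp : Psub n i j
  · rw [if_pos hp, colC_apply, if_neg]
    intro hc
    have h1 : (j : ℕ) + 1 < n := hp.2
    omega
  · rw [if_neg hp]

/-- The map on basis elements of the free module. -/
def Phi0 (θ : F → ℂ) (mu : Matrix (Fin n) (Fin n) F)
    (p : Matrix (Fin n) (Fin n) F × Matrix (Fin n) (Fin n) F) :
    {lam // lam ∈ TSet F n mu} → ℂ :=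
  if p.1 ∈ patternGroup F (fun i j : Fin n => i < j) ∧ p.2 ∈ leftOrbit F (Psub n) mu
  then targetAct F n θ mu p.1 (Emap mu p.2) else 0

/-- The comparison map from the free module to the target module. -/
def Phi (θ : F → ℂ) (mu : Matrix (Fin n) (Fin n) F) :
    FreeW F n →ₗ[ℂ] ({lam // lam ∈ TSet F n mu} → ℂ) :=
  Finsupp.linearCombination ℂ (Phi0 θ mu)

lemma Phi_single (θ : F → ℂ) (mu : Matrix (Fin n) (Fin n) F)
    (p : Matrix (Fin n) (Fin n) F × Matrix (Fin n) (Fin n) F) (c : ℂ) :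
    Phi θ mu (Finsupp.single p c) = c • Phi0 θ mu p := by
  rw [Phi, Finsupp.linearCombination_single]

lemma rel_le_ker (hn : 0 < n) {θ : F → ℂ} (hθadd : ∀ a b, θ (a + b) = θ a * θ b)
    (mu : Matrix (Fin n) (Fin n) F) :
    RelMod F n θ mu ≤ LinearMap.ker (Phi θ mu) := by
  rw [RelMod, Submodule.span_le]
  rintro w (⟨g, hg, h, hh, ν, hν, rfl⟩ | ⟨p, hp, rfl⟩)
  · rw [SetLike.mem_coe, LinearMap.mem_ker, map_sub, _root_.map_smul, Phi_single, Phi_single,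
      one_smul, one_smul]
    have hhPf : h ∈ patternGroup F (fun i j : Fin n => i < j) := pg_mono Psub_lt hh
    have e1 : Phi0 θ mu (g * h, ν) = targetAct F n θ mu (g * h) (Emap mu ν) :=
      if_pos ⟨pg_mul_mem Pf_lt Pf_trans hg hhPf, hν⟩
    have e2 : Phi0 θ mu (g, lact (Psub n) h ν) =
        targetAct F n θ mu g (Emap mu (lact (Psub n) h ν)) :=
      if_pos ⟨hg, orbit_lact hh hν⟩
    rw [e1, e2, ← targetAct_mul hn hθadd mu hg hhPf, targetAct_E hn mu hh hν,
      targetAct_smul, sub_self]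
  · rw [SetLike.mem_coe, LinearMap.mem_ker, Phi_single, one_smul]
    exact if_neg hp

lemma Phi0_act (hn : 0 < n) {θ : F → ℂ} (hθadd : ∀ a b, θ (a + b) = θ a * θ b)
    (mu : Matrix (Fin n) (Fin n) F) {u : Matrix (Fin n) (Fin n) F}
    (hu : u ∈ patternGroup F (fun i j : Fin n => i < j))
    (p : Matrix (Fin n) (Fin n) F × Matrix (Fin n) (Fin n) F) :
    Phi0 θ mu (u * p.1, p.2) = targetAct F n θ mu u (Phi0 θ mu p) := by
  by_cases hp : p.1 ∈ patternGroup F (fun i j : Fin n => i < j) ∧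
      p.2 ∈ leftOrbit F (Psub n) mu
  · have h1 : (u * p.1, p.2).1 ∈ patternGroup F (fun i j : Fin n => i < j) ∧
        (u * p.1, p.2).2 ∈ leftOrbit F (Psub n) mu :=
      ⟨pg_mul_mem Pf_lt Pf_trans hu hp.1, hp.2⟩
    rw [Phi0, if_pos h1, Phi0, if_pos hp]
    exact (targetAct_mul hn hθadd mu hu hp.1 _).symm
  · have h1 : ¬ ((u * p.1, p.2).1 ∈ patternGroup F (fun i j : Fin n => i < j) ∧
        (u * p.1, p.2).2 ∈ leftOrbit F (Psub n) mu) := by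
      intro hc
      apply hp
      refine ⟨?_, hc.2⟩
      have he : p.1 = Ring.inverse u * (u * p.1) := by
        rw [← mul_assoc, Ring.inverse_mul_cancel _ (pg_isUnit Pf_lt hu), one_mul]
      rw [he]
      exact pg_mul_mem Pf_lt Pf_trans (pg_inv_mem Pf_lt Pf_trans hu) hc.1
    rw [Phi0, if_neg h1, Phi0, if_neg hp, targetAct_zero]

lemma Phi_act (hn : 0 < n) {θ : F → ℂ} (hθadd : ∀ a b, θ (a + b) = θ a * θ b)
    (mu : Matrix (Fin n) (Fin n) F) {u : Matrix (Fin n) (Fin n) F}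
    (hu : u ∈ patternGroup F (fun i j : Fin n => i < j)) (w : FreeW F n) :
    Phi θ mu (freeAct F n u w) = targetAct F n θ mu u (Phi θ mu w) := by
  induction w using Finsupp.induction_linear with
  | zero => rw [map_zero, map_zero, targetAct_zero]
  | add f g hf hg => rw [map_add, map_add, map_add, targetAct_add, hf, hg]
  | single p c =>
    have hfs : freeAct F n u (Finsupp.single p c) = Finsupp.single (u * p.1, p.2) c := by
      simp only [freeAct, Finsupp.lmapDomain_apply, Finsupp.mapDomain_single]
    rw [hfs, Phi_single, Phi_single, Phi0_act hn hθadd mu hu p, targetAct_smul]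

lemma delta_mem_range (hn : 0 < n) {θ : F → ℂ} (hθadd : ∀ a b, θ (a + b) = θ a * θ b)
    (hθne : ∀ a, θ a ≠ 0) (hθnt : ∃ a, θ a ≠ 1)
    (mu : Matrix (Fin n) (Fin n) F) (l : {lam // lam ∈ TSet F n mu}) :
    (fun l' => if l = l' then (1 : ℂ) else 0) ∈ LinearMap.range (Phi θ mu) := by
  set ν := dproj (Psub n) l.val with hν
  set v : FreeW F n := ∑ x : Fin n → F,
    θ (pairF l.val (colC x)) • Finsupp.single (acol x, ν) (1 : ℂ) with hv
  have hQ : ((Fintype.card F : ℂ) ^ n) ≠ 0 :=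
    pow_ne_zero _ (Nat.cast_ne_zero.2 Fintype.card_ne_zero)
  have hPhiv : Phi θ mu v =
      ((Fintype.card F : ℂ) ^ n) • fun l' => if l = l' then (1 : ℂ) else 0 := by
    rw [hv, map_sum]
    have e1 : ∀ x : Fin n → F,
        Phi θ mu (θ (pairF l.val (colC x)) • Finsupp.single (acol x, ν) 1)
        = θ (pairF l.val (colC x)) • Phi0 θ mu (acol x, ν) := by
      intro x
      rw [_root_.map_smul, Phi_single, one_smul]
    have e2 : ∀ x : Fin n → F, Phi0 θ mu (acol x, ν) = fun l' =>
        if dproj (Psub n) l'.val = ν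
        then θ (pairF l'.val (Ring.inverse (acol x) - 1)) else 0 := by
      intro x
      rw [Phi0, if_pos ⟨acol_mem x, by rw [hν]; exact l.2.2⟩, targetAct_acol]
    rw [Finset.sum_congr rfl fun x _ => by rw [e1 x, e2 x]]
    funext l'
    rw [Finset.sum_apply, Pi.smul_apply, smul_eq_mul]
    by_cases hc : dproj (Psub n) l'.val = ν
    · have hterm : ∀ x : Fin n → F,
          (θ (pairF l.val (colC x)) • fun l'' : {lam // lam ∈ TSet F n mu} =>
            if dproj (Psub n) l''.val = ν
            then θ (pairF l''.val (Ring.inverse (acol x) - 1)) else 0) l'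
          = θ (∑ i : Fin n,
              (if (i : ℕ) ≠ n - 1 then (l.val - l'.val) i ⟨n - 1, by omega⟩ else 0) * x i) := by
        intro x
        rw [Pi.smul_apply, if_pos hc, smul_eq_mul]
        have hrc : Ring.inverse (acol x) - 1 = -(colC x) := by
          rw [rinv_acol]
          exact sub_sub_cancel_left _ _
        rw [hrc, pairF_neg_right, ← hθadd, ← sub_eq_add_neg, ← pairF_sub_left,
          pairF_colC hn]
      rw [Finset.sum_congr rfl fun x _ => hterm x,
        char_sum hθadd hθne hθnt _]
      by_cases hl : l = l'
      · have hc0 : (fun i : Fin n =>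
            if (i : ℕ) ≠ n - 1 then (l.val - l'.val) i ⟨n - 1, by omega⟩ else 0) = 0 := by
          funext i
          rw [← hl, sub_self]
          simp only [Matrix.zero_apply, ite_self]
          rfl
        rw [if_pos hc0, if_pos hl, mul_one]
      · have hc0 : ¬ ((fun i : Fin n =>
            if (i : ℕ) ≠ n - 1 then (l.val - l'.val) i ⟨n - 1, by omega⟩ else 0) = 0) := by
          intro h0
          apply hl
          apply Subtype.ext
          apply tset_ext hn l.2 l'.2
          · rw [hc, hν]
          · intro i hi
            have := congrFun h0 i
            rw [if_pos hi] at this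
            have h2 : l.val i ⟨n - 1, by omega⟩ - l'.val i ⟨n - 1, by omega⟩ = 0 := this
            exact sub_eq_zero.1 h2
        rw [if_neg hc0, if_neg hl, mul_zero]
    · have hlne : ¬ l = l' := by
        intro he
        apply hc
        rw [← he, hν]
      rw [if_neg hlne, mul_zero]
      apply Finset.sum_eq_zero
      intro x _
      rw [Pi.smul_apply, if_neg hc, smul_zero]
  have hδ : (fun l' => if l = l' then (1 : ℂ) else 0) =
      ((Fintype.card F : ℂ) ^ n)⁻¹ • Phi θ mu v := by
    rw [hPhiv, smul_smul, inv_mul_cancel₀ hQ, one_smul]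
  rw [hδ]
  exact Submodule.smul_mem _ _ ⟨v, rfl⟩

lemma Phi_range_top (hn : 0 < n) {θ : F → ℂ} (hθadd : ∀ a b, θ (a + b) = θ a * θ b)
    (hθne : ∀ a, θ a ≠ 0) (hθnt : ∃ a, θ a ≠ 1) (mu : Matrix (Fin n) (Fin n) F) :
    LinearMap.range (Phi θ mu) = ⊤ := by
  rw [Submodule.eq_top_iff']
  intro f
  have hf : f = ∑ l : {lam // lam ∈ TSet F n mu},
      f l • fun l' => if l = l' then (1 : ℂ) else 0 := pi_eq_sum_univ f
  rw [hf]
  apply Submodule.sum_mem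
  intro l _
  exact Submodule.smul_mem _ _ (delta_mem_range hn hθadd hθne hθnt mu l)

end Aux5

theorem induced_supermodule_isomorphism
    {n : ℕ} (hn : 0 < n) (F : Type*) [Field F] [Fintype F]
    (θ : F → ℂ) (hθadd : ∀ a b, θ (a + b) = θ a * θ b)
    (hθne : ∀ a, θ a ≠ 0) (hθnt : ∃ a, θ a ≠ 1)
    (mu : Matrix (Fin n) (Fin n) F) (hmu : ∀ i j, mu i j ≠ 0 → Psub n i j) :
    ∃ φ : IndMod F n θ mu ≃ₗ[ℂ] ({lam // lam ∈ TSet F n mu} → ℂ),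
      ∀ u ∈ patternGroup F (fun i j : Fin n => i < j), ∀ w : FreeW F n,
        φ ((RelMod F n θ mu).mkQ (freeAct F n u w)) =
          targetAct F n θ mu u (φ ((RelMod F n θ mu).mkQ w)) := by
  set ι := {lam // lam ∈ TSet F n mu} with hι
  -- the induced comparison map on the quotient
  set Φb : IndMod F n θ mu →ₗ[ℂ] (ι → ℂ) :=
    (RelMod F n θ mu).liftQ (Phi θ mu) (rel_le_ker hn hθadd mu) with hΦb
  have happ : ∀ v : FreeW F n, Φb ((RelMod F n θ mu).mkQ v) = Phi θ mu v := by
    intro v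
    rw [hΦb, Submodule.mkQ_apply, Submodule.liftQ_apply]
  have hsurj : Function.Surjective Φb := by
    rw [← LinearMap.range_eq_top, hΦb, Submodule.range_liftQ,
      Phi_range_top hn hθadd hθne hθnt mu]
  -- the spanning map in the other direction
  set lastF : Fin n := ⟨n - 1, by omega⟩ with hlastF
  set ψ0 : ι → IndMod F n θ mu := fun l =>
    (RelMod F n θ mu).mkQ
      (Finsupp.single (acol (fun i => l.val i lastF), dproj (Psub n) l.val) 1) with hψ0
  set Ψ : (ι → ℂ) →ₗ[ℂ] IndMod F n θ mu := (Pi.basisFun ℂ ι).constr ℂ ψ0 with hΨ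
  have hΨsurj : Function.Surjective Ψ := by
    rw [← LinearMap.range_eq_top, Submodule.eq_top_iff']
    intro z
    obtain ⟨w, rfl⟩ := Submodule.mkQ_surjective _ z
    induction w using Finsupp.induction_linear with
    | zero => rw [map_zero]; exact zero_mem _
    | add f g hf hg => rw [map_add]; exact add_mem hf hg
    | single p c =>
      have hsm : Finsupp.single p c = c • Finsupp.single p (1 : ℂ) := by
        rw [Finsupp.smul_single, smul_eq_mul, mul_one]
      rw [hsm, _root_.map_smul]
      apply Submodule.smul_mem
      by_cases hp : p.1 ∈ patternGroup F (fun i j : Fin n => i < j) ∧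
          p.2 ∈ leftOrbit F (Psub n) mu
      · obtain ⟨x, h, hh, hgh, hx⟩ := decomp hn hp.1
        have hν' : lact (Psub n) h p.2 ∈ leftOrbit F (Psub n) mu := orbit_lact hh hp.2
        have hrel : Finsupp.single (acol x * h, p.2) (1 : ℂ) -
            θ (pairF p.2 (Ring.inverse h - 1)) •
              Finsupp.single (acol x, lact (Psub n) h p.2) 1 ∈ RelMod F n θ mu := by
          apply Submodule.subset_span
          left
          exact ⟨acol x, acol_mem x, h, hh, p.2, hp.2, rfl⟩
        have hquot : (RelMod F n θ mu).mkQ (Finsupp.single p 1) =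
            θ (pairF p.2 (Ring.inverse h - 1)) •
              (RelMod F n θ mu).mkQ (Finsupp.single (acol x, lact (Psub n) h p.2) 1) := by
          have h0 : (RelMod F n θ mu).mkQ (Finsupp.single (acol x * h, p.2) (1 : ℂ) -
              θ (pairF p.2 (Ring.inverse h - 1)) •
                Finsupp.single (acol x, lact (Psub n) h p.2) 1) = 0 := by
            rw [Submodule.mkQ_apply]
            exact (Submodule.Quotient.mk_eq_zero _).2 hrel
          rw [map_sub, _root_.map_smul, sub_eq_zero] at h0
          have hpe : p = (acol x * h, p.2) := by
            rw [← hgh]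
          rw [hpe]
          exact h0
        -- the element of TSet corresponding to `(acol x, h·ν)`
        have hdl : dproj (Psub n) (lact (Psub n) h p.2 + colC x) = lact (Psub n) h p.2 := by
          rw [dproj_add, dproj_Psub_colC, add_zero, orbit_dproj hν']
        have hlmem : lact (Psub n) h p.2 + colC x ∈ TSet F n mu := by
          constructor
          · intro i j h0
            rw [Matrix.add_apply] at h0
            by_cases h1 : lact (Psub n) h p.2 i j = 0
            · rw [h1, zero_add] at h0
              rw [colC_apply] at h0
              by_cases h2 : (j : ℕ) = n - 1 ∧ (i : ℕ) ≠ n - 1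
              · have := i.isLt
                have := j.isLt
                show (i : ℕ) < (j : ℕ)
                omega
              · rw [if_neg h2] at h0
                exact absurd rfl h0
            · exact Psub_lt (orbit_supp hν' i j h1)
          · rw [hdl]
            exact hν'
        have hacoleq : acol (fun i => (lact (Psub n) h p.2 + colC x) i lastF) = acol x := by
          unfold acol
          congr 1
          ext i j
          rw [colC_apply, colC_apply]
          by_cases hcnd : (j : ℕ) = n - 1 ∧ (i : ℕ) ≠ n - 1
          · rw [if_pos hcnd, if_pos hcnd, Matrix.add_apply]
            have hz : lact (Psub n) h p.2 i lastF = 0 := by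
              by_contra h0
              have := (orbit_supp hν' i lastF h0).2
              rw [hlastF] at this
              simp only [] at this
              omega
            have hcx : colC x i lastF = x i := by
              rw [colC_apply, if_pos ⟨by rw [hlastF], hcnd.2⟩]
            rw [hz, hcx, zero_add]
          · rw [if_neg hcnd, if_neg hcnd]
        have hψval : ψ0 ⟨lact (Psub n) h p.2 + colC x, hlmem⟩ =
            (RelMod F n θ mu).mkQ (Finsupp.single (acol x, lact (Psub n) h p.2) 1) := by
          rw [hψ0]
          simp only []
          rw [hacoleq, hdl]
        rw [hquot]
        apply Submodule.smul_mem
        refine ⟨Pi.basisFun ℂ ι ⟨lact (Psub n) h p.2 + colC x, hlmem⟩, ?_⟩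
        rw [hΨ, Module.Basis.constr_basis, hψval]
      · have hmem : Finsupp.single p (1 : ℂ) ∈ RelMod F n θ mu :=
          Submodule.subset_span (Or.inr ⟨p, hp, rfl⟩)
        have h0 : (RelMod F n θ mu).mkQ (Finsupp.single p (1 : ℂ)) = 0 := by
          rw [Submodule.mkQ_apply]
          exact (Submodule.Quotient.mk_eq_zero _).2 hmem
        rw [h0]
        exact zero_mem _
  -- dimension count
  haveI hfin : Module.Finite ℂ (IndMod F n θ mu) := Module.Finite.of_surjective Ψ hΨsurj
  have hd1 : Module.finrank ℂ (IndMod F n θ mu) ≤ Module.finrank ℂ (ι → ℂ) := by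
    have hrn := LinearMap.finrank_range_add_finrank_ker Ψ
    rw [LinearMap.range_eq_top.2 hΨsurj, finrank_top] at hrn
    omega
  have hd2 : Module.finrank ℂ (ι → ℂ) ≤ Module.finrank ℂ (IndMod F n θ mu) := by
    have hrn := LinearMap.finrank_range_add_finrank_ker Φb
    rw [LinearMap.range_eq_top.2 hsurj, finrank_top] at hrn
    omega
  have heq : Module.finrank ℂ (IndMod F n θ mu) = Module.finrank ℂ (ι → ℂ) :=
    le_antisymm hd1 hd2
  have hinj : Function.Injective Φb :=
    (LinearMap.injective_iff_surjective_of_finrank_eq_finrank heq).2 hsurj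
  refine ⟨LinearEquiv.ofBijective Φb ⟨hinj, hsurj⟩, ?_⟩
  intro u hu w
  change Φb _ = targetAct F n θ mu u (Φb _)
  rw [happ, happ,
    Phi_act hn hθadd mu hu w]
end
end
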